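/- arXiv:2412.18368 — 7 statements merged into one kernel-verified Lean document; each statement's English description precedes it below -/
import Mathlib

section
/- For every nonnegative integer n, the n-th complete homogeneous symmetric function evaluated at (1/1², 1/2², 1/3², …) equals (-1)^n · π^{2n}/(2n)! · (2 - 2^{2n}) · B_{2n}; that is, ∑_{1 ≤ i₁ ≤ i₂ ≤ ⋯ ≤ iₙ} 1/(i₁² i₂² ⋯ iₙ²) = (-1)^n π^{2n} (2 - 2^{2n}) B_{2n} / (2n)!. -/
open Real Filter Finset
open scoped Classical Topology

noncomputable section
namespace HIS

def x (j : ℕ+) : ℝ := 1 / ((j : ℕ) : ℝ) ^ 2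

def term (n : ℕ) (f : Fin n → ℕ+) : ℝ := ∏ k, x (f k)

lemma x_nonneg (j : ℕ+) : 0 ≤ x j := div_nonneg zero_le_one (sq_nonneg _)

lemma term_nonneg (n : ℕ) (f : Fin n → ℕ+) : 0 ≤ term n f :=
  Finset.prod_nonneg fun k _ => x_nonneg _

lemma summable_x : Summable x := by
  have h : Summable (fun n : ℕ => 1 / (n : ℝ) ^ 2) :=
    (Real.summable_one_div_nat_pow).mpr one_lt_two
  exact h.comp_injective PNat.coe_injective

lemma summable_term (n : ℕ) : Summable (term n) := by
  induction n with
  | zero =>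
      have : (term 0) = fun _ => (1 : ℝ) := by
        funext f; simp [term]
      rw [this]
      exact summable_of_finite_support (Set.toFinite _)
  | succ n ih =>
      have h : Summable (fun p : ℕ+ × (Fin n → ℕ+) => x p.1 * term n p.2) :=
        summable_x.mul_of_nonneg ih (fun j => x_nonneg j) (fun f => term_nonneg n f)
      have h2 := ((Fin.consEquiv (fun _ : Fin (n + 1) => ℕ+)).symm.summable_iff
        (f := fun p : ℕ+ × (Fin n → ℕ+) => x p.1 * term n p.2)).mpr h
      refine h2.congr fun f => ?_
      simp [term, Function.comp, Fin.consEquiv, Fin.prod_univ_succ, Fin.tail]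

lemma summable_term_sub (n : ℕ) :
    Summable (fun f : {f : Fin n → ℕ+ // Monotone f} => term n f.1) :=
  (summable_term n).comp_injective Subtype.val_injective


def Fm (m : ℕ) : Finset ℕ+ := (Finset.range (m + 1)).subtype (fun k => 0 < k)

lemma mem_Fm {m : ℕ} {j : ℕ+} : j ∈ Fm m ↔ (j : ℕ) ≤ m := by
  refine (Finset.mem_subtype (p := fun k => 0 < k) (s := Finset.range (m + 1)) (a := j)).trans ?_; rw [Finset.mem_range]
  exact Nat.lt_succ_iff

def A (n m : ℕ) : Finset (Fin n → ℕ+) := (Fintype.piFinset fun _ => Fm m).filter Monotone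

def T (n m : ℕ) : ℝ := ∑ f ∈ A n m, term n f

def B (n m : ℕ) : Finset {f : Fin n → ℕ+ // Monotone f} :=
  (Fintype.piFinset fun _ => Fm m).subtype Monotone

lemma sum_B (n m : ℕ) : ∑ f ∈ B n m, term n f.1 = T n m := by
  rw [B, T, A, Finset.sum_subtype_eq_sum_filter]

lemma tendsto_T (n : ℕ) :
    Tendsto (fun m => T n m) atTop
      (𝓝 (∑' f : {f : Fin n → ℕ+ // Monotone f}, term n f.1)) := by
  have hs := (summable_term_sub n).hasSum
  have hB : Monotone (B n) := by
    intro a b hab g hg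
    simp only [B, Finset.mem_subtype] at hg ⊢
    exact Fintype.piFinset_subset _ _ (fun _ => by
      intro j hj
      rw [mem_Fm] at hj ⊢
      omega) hg
  have hcov : ∀ g : {f : Fin n → ℕ+ // Monotone f}, ∃ m, g ∈ B n m := by
    intro g
    refine ⟨Finset.univ.sup (fun k => (g.1 k : ℕ)), ?_⟩
    simp only [B, Finset.mem_subtype, Fintype.mem_piFinset]
    intro k
    exact mem_Fm.mpr (Finset.le_sup (f := fun k => ((g.1 k : ℕ))) (Finset.mem_univ k))
  have := hs.comp (tendsto_atTop_finset_of_monotone hB hcov)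
  refine this.congr fun m => ?_
  exact sum_B n m

lemma T_zero (m : ℕ) : T 0 m = 1 := by
  rw [T]
  have : A 0 m = {(fun k => Fin.elim0 k : Fin 0 → ℕ+)} := by
    ext f
    simp only [A, Finset.mem_filter, Fintype.mem_piFinset, Finset.mem_singleton]
    constructor
    · intro _; funext k; exact k.elim0
    · intro h; subst h
      exact ⟨fun k => k.elim0, fun a b _ => a.elim0⟩
  rw [this, Finset.sum_singleton, term]
  simp

lemma T_succ_zero (n : ℕ) : T (n + 1) 0 = 0 := by
  rw [T]
  have : A (n + 1) 0 = ∅ := by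
    ext f
    simp only [A, Finset.mem_filter, Fintype.mem_piFinset, Finset.notMem_empty, iff_false]
    rintro ⟨h, -⟩
    have h1 := mem_Fm.mp (h 0)
    have h2 := (f 0).pos
    omega
  simp [this]


lemma mem_A {n m : ℕ} {f : Fin n → ℕ+} :
    f ∈ A n m ↔ (∀ k, (f k : ℕ) ≤ m) ∧ Monotone f := by
  simp only [A, Finset.mem_filter, Fintype.mem_piFinset, mem_Fm]

lemma T_rec (n m : ℕ) :
    T (n + 1) (m + 1) = T (n + 1) m + T n (m + 1) / ((m : ℝ) + 1) ^ 2 := by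
  classical
  set v : ℕ+ := ⟨m + 1, Nat.succ_pos m⟩ with hv
  have hsplit := Finset.sum_filter_add_sum_filter_not (A (n + 1) (m + 1))
    (fun f => (f (Fin.last n) : ℕ) ≤ m) (term (n + 1))
  have h1 : (A (n + 1) (m + 1)).filter (fun f => (f (Fin.last n) : ℕ) ≤ m) = A (n + 1) m := by
    ext f
    simp only [Finset.mem_filter, mem_A]
    constructor
    · rintro ⟨⟨hb, hmono⟩, hlast⟩
      refine ⟨fun k => le_trans ?_ hlast, hmono⟩
      exact (PNat.coe_le_coe _ _).mpr (hmono (Fin.le_last k))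
    · rintro ⟨hb, hmono⟩
      exact ⟨⟨fun k => le_trans (hb k) (Nat.le_succ m), hmono⟩, hb _⟩
  have h2 : ∑ f ∈ (A (n + 1) (m + 1)).filter (fun f => ¬ (f (Fin.last n) : ℕ) ≤ m),
      term (n + 1) f = T n (m + 1) / ((m : ℝ) + 1) ^ 2 := by
    have hx : x v = 1 / ((m : ℝ) + 1) ^ 2 := by
      simp [x, hv]
    rw [T, Finset.sum_div]
    refine Finset.sum_nbij' (fun f => Fin.init f) (fun g => Fin.snoc g v) ?_ ?_ ?_ ?_ ?_
    · intro f hf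
      simp only [Finset.mem_filter, mem_A] at hf
      obtain ⟨⟨hb, hmono⟩, -⟩ := hf
      refine mem_A.mpr ⟨fun k => hb _, fun a b hab => hmono ?_⟩
      exact Fin.castSucc_le_castSucc_iff.mpr hab
    · intro g hg
      rw [mem_A] at hg
      obtain ⟨hb, hmono⟩ := hg
      have hle : ∀ k, g k ≤ v := by
        intro k
        have := hb k
        exact (PNat.coe_le_coe _ _).mp (by simpa [hv] using this)
      have hmono2 : Monotone (Fin.snoc g v : Fin (n + 1) → ℕ+) := by
        intro a b hab
        rcases Fin.eq_castSucc_or_eq_last b with ⟨b', rfl⟩ | rfl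
        · have ha : a ≤ Fin.castSucc b' := hab
          rcases Fin.eq_castSucc_or_eq_last a with ⟨a', rfl⟩ | rfl
          · rw [Fin.snoc_castSucc, Fin.snoc_castSucc]
            exact hmono (Fin.castSucc_le_castSucc_iff.mp hab)
            
          · exact absurd (lt_of_le_of_lt ha (Fin.castSucc_lt_last b')) (lt_irrefl _)
        · rcases Fin.eq_castSucc_or_eq_last a with ⟨a', rfl⟩ | rfl
          · rw [Fin.snoc_castSucc, Fin.snoc_last]
            exact hle a'
          · exact le_rfl
      refine Finset.mem_filter.mpr ⟨mem_A.mpr ⟨?_, hmono2⟩, ?_⟩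
      · intro k
        rcases Fin.eq_castSucc_or_eq_last k with ⟨k', rfl⟩ | rfl
        · simp only [Fin.snoc_castSucc]; exact hb k'
        · simp only [Fin.snoc_last]
          exact le_of_eq rfl
      · simp only [Fin.snoc_last, not_le]
        simp [hv]
    · intro f hf
      simp only [Finset.mem_filter, mem_A] at hf
      obtain ⟨⟨hb, -⟩, hlast⟩ := hf
      have hfv : f (Fin.last n) = v := by
        have h1 := hb (Fin.last n)
        apply PNat.coe_injective
        have : (v : ℕ) = m + 1 := rfl
        omega
      rw [← hfv]
      exact Fin.snoc_init_self f
    · intro g _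
      simp
    · intro f hf
      simp only [Finset.mem_filter, mem_A] at hf
      obtain ⟨⟨hb, -⟩, hlast⟩ := hf
      have hfv : f (Fin.last n) = v := by
        have h1 := hb (Fin.last n)
        apply PNat.coe_injective
        have : (v : ℕ) = m + 1 := rfl
        omega
      show term (n + 1) f = term n (Fin.init f) / ((m : ℝ) + 1) ^ 2
      rw [term, term, Fin.prod_univ_castSucc, hfv, hx]
      simp only [Fin.init]
      rw [mul_one_div]
  rw [T, ← hsplit, h1, h2]
  rfl

def b (m k : ℕ) : ℝ :=
  ((m.factorial : ℝ)) ^ 2 / (((m - k).factorial : ℝ) * ((m + k).factorial : ℝ))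

def R (m n : ℕ) : ℝ := 2 * ∑ k ∈ Finset.Icc 1 m, (-1 : ℝ) ^ (k + 1) * b m k / (k : ℝ) ^ (2 * n)

lemma b_nonneg (m k : ℕ) : 0 ≤ b m k := by
  apply div_nonneg (sq_nonneg _)
  positivity

lemma b_zero (m : ℕ) : b m 0 = 1 := by
  have h := m.factorial_pos
  rw [b]
  rw [Nat.sub_zero, Nat.add_zero, sq]
  field_simp

lemma b_succ {m k : ℕ} (hk : k + 1 ≤ m) :
    b m (k + 1) = b m k * (((m : ℝ) - k) / ((m : ℝ) + k + 1)) := by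
  obtain ⟨a, rfl⟩ : ∃ a, m = k + 1 + a := ⟨m - (k + 1), by omega⟩
  have h1 : k + 1 + a - (k + 1) = a := by omega
  have h2 : k + 1 + a - k = a + 1 := by omega
  have h3 : k + 1 + a + (k + 1) = (k + 1 + a + k) + 1 := by omega
  rw [b, b, h1, h2, h3, Nat.factorial_succ, Nat.factorial_succ]
  have p1 : ((a.factorial : ℝ)) ≠ 0 := Nat.cast_ne_zero.mpr a.factorial_ne_zero
  have p2 : (((k + 1 + a + k).factorial : ℝ)) ≠ 0 :=
    Nat.cast_ne_zero.mpr (k + 1 + a + k).factorial_ne_zero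
  have p3 : ((a : ℝ) + 1) ≠ 0 := by positivity
  have p4 : ((k : ℝ) + 1 + a + k + 1) ≠ 0 := by positivity
  push_cast
  rw [div_mul_div_comm]
  rw [div_eq_div_iff (by positivity) (by positivity)]
  ring

lemma b_le_one {m k : ℕ} (hk : k ≤ m) : b m k ≤ 1 := by
  rw [b, div_le_one (by positivity)]
  have key : ∀ k, k ≤ m → (m.factorial) ^ 2 ≤ (m - k).factorial * (m + k).factorial := by
    intro k
    induction k with
    | zero => intro _; simp [sq]
    | succ k ih =>
        intro hk1
        have hk0 : k ≤ m := by omega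
        have h2 : m - k = (m - (k + 1)) + 1 := by omega
        have h3 : m + (k + 1) = (m + k) + 1 := by omega
        calc (m.factorial) ^ 2 ≤ (m - k).factorial * (m + k).factorial := ih hk0
        _ ≤ (m - (k + 1)).factorial * (m + (k + 1)).factorial := by
            rw [h2, h3, Nat.factorial_succ, Nat.factorial_succ]
            have : (m - (k + 1)) + 1 ≤ (m + k) + 1 := by omega
            calc (m - (k + 1) + 1) * (m - (k + 1)).factorial * (m + k).factorial
                ≤ ((m + k) + 1) * (m - (k + 1)).factorial * (m + k).factorial := by
                  exact Nat.mul_le_mul_right _ (Nat.mul_le_mul_right _ this)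
              _ = (m - (k + 1)).factorial * (((m + k) + 1) * (m + k).factorial) := by ring
  exact_mod_cast key k hk

lemma b_tendsto (k : ℕ) : Tendsto (fun m => b m k) atTop (𝓝 1) := by
  induction k with
  | zero => simpa [b_zero] using tendsto_const_nhds
  | succ k ih =>
      have h1 : Tendsto (fun m : ℕ => ((m : ℝ) - k) / ((m : ℝ) + k + 1)) atTop (𝓝 1) := by
        have h0 : Tendsto (fun m : ℕ => ((2 * k + 1 : ℝ)) / ((m : ℝ) + k + 1)) atTop (𝓝 0) := by
          apply Tendsto.div_atTop tendsto_const_nhds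
          apply tendsto_atTop_add_const_right
          apply tendsto_atTop_add_const_right
          exact tendsto_natCast_atTop_atTop (R := ℝ)
        have := tendsto_const_nhds (x := (1 : ℝ)) (f := atTop (α := ℕ)) |>.sub h0
        rw [sub_zero] at this
        refine this.congr' ?_
        filter_upwards [eventually_ge_atTop 1] with m hm
        have hm1 : ((m : ℝ) + k + 1) ≠ 0 := by positivity
        field_simp
        ring
      have := (ih.mul h1)
      rw [mul_one] at this
      refine this.congr' ?_
      filter_upwards [eventually_ge_atTop (k + 1)] with m hm
      exact (b_succ hm).symm

lemma b_rec {m k : ℕ} (hk : k ≤ m) :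
    b (m + 1) k * (((m : ℝ) + 1) ^ 2 - (k : ℝ) ^ 2) = b m k * ((m : ℝ) + 1) ^ 2 := by
  obtain ⟨a, rfl⟩ : ∃ a, m = k + a := ⟨m - k, by omega⟩
  have h1 : k + a + 1 - k = a + 1 := by omega
  have h2 : k + a - k = a := by omega
  have h3 : k + a + 1 + k = (k + a + k) + 1 := by omega
  rw [b, b, h1, h2, h3, Nat.factorial_succ, Nat.factorial_succ, Nat.factorial_succ]
  have p1 : ((a.factorial : ℝ)) ≠ 0 := Nat.cast_ne_zero.mpr a.factorial_ne_zero
  have p2 : (((k + a + k).factorial : ℝ)) ≠ 0 :=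
    Nat.cast_ne_zero.mpr (k + a + k).factorial_ne_zero
  have p5 : (((k + a).factorial : ℝ)) ≠ 0 := Nat.cast_ne_zero.mpr (k + a).factorial_ne_zero
  push_cast
  rw [div_mul_eq_mul_div, div_mul_eq_mul_div, div_eq_div_iff (by positivity) (by positivity)]
  ring

lemma R_rec (m n : ℕ) :
    R (m + 1) (n + 1) = R m (n + 1) + R (m + 1) n / ((m : ℝ) + 1) ^ 2 := by
  have hM : ((m : ℝ) + 1) ≠ 0 := by positivity
  have key : ∀ k ∈ Finset.Icc 1 (m + 1),
      (-1 : ℝ) ^ (k + 1) * b (m + 1) k / (k : ℝ) ^ (2 * (n + 1)) -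
        ((-1 : ℝ) ^ (k + 1) * b (m + 1) k / (k : ℝ) ^ (2 * n)) / ((m : ℝ) + 1) ^ 2
      = if k ≤ m then (-1 : ℝ) ^ (k + 1) * b m k / (k : ℝ) ^ (2 * (n + 1)) else 0 := by
    intro k hk
    rw [Finset.mem_Icc] at hk
    have hk0 : (k : ℝ) ≠ 0 := Nat.cast_ne_zero.mpr (by omega)
    have hpow : (k : ℝ) ^ (2 * (n + 1)) = (k : ℝ) ^ (2 * n) * (k : ℝ) ^ 2 := by
      rw [← pow_add]; ring_nf
    by_cases hkm : k ≤ m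
    · rw [if_pos hkm]
      have hb := b_rec hkm
      rw [hpow]
      have hP : ((k : ℝ)) ^ (2 * n) ≠ 0 := pow_ne_zero _ hk0
      have hPK : ((k : ℝ)) ^ (2 * n) * (k : ℝ) ^ 2 ≠ 0 := by positivity
      have hPM : ((k : ℝ)) ^ (2 * n) * ((m : ℝ) + 1) ^ 2 ≠ 0 := by positivity
      rw [div_div, div_sub_div _ _ hPK hPM, div_eq_div_iff (by positivity) hPK]
      linear_combination ((-1 : ℝ) ^ (k + 1) * ((k:ℝ) ^ (2*n)) ^ 2 * (k:ℝ) ^ 2) * hb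
    · rw [if_neg hkm]
      have hk1 : k = m + 1 := by omega
      subst hk1
      rw [hpow]
      have hkp : ((m + 1 : ℕ) : ℝ) = (m : ℝ) + 1 := by push_cast; ring
      rw [hkp]
      field_simp
      ring
  have expand : ∑ k ∈ Finset.Icc 1 m, (-1:ℝ)^(k+1) * b m k / (k:ℝ)^(2*(n+1))
      = ∑ k ∈ Finset.Icc 1 (m+1), ((-1:ℝ)^(k+1) * b (m+1) k / (k:ℝ)^(2*(n+1)) -
          ((-1:ℝ)^(k+1) * b (m+1) k / (k:ℝ)^(2*n)) / ((m:ℝ)+1)^2) := by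
    rw [Finset.sum_congr rfl key]
    rw [Finset.sum_ite, Finset.sum_const_zero, add_zero]
    apply Finset.sum_congr _ (fun _ _ => rfl)
    ext k
    simp only [Finset.mem_filter, Finset.mem_Icc]
    omega
  rw [R, R, R, expand, Finset.sum_sub_distrib, ← Finset.sum_div]
  ring



def u (m i : ℕ) : ℝ := (-1 : ℝ) ^ i * (((2 * m).choose i : ℕ) : ℝ)

def Stg (m : ℕ) : ℝ := ∑ j ∈ Finset.range m, (-1 : ℝ) ^ j * (((2 * m).choose (m + 1 + j) : ℕ) : ℝ)

lemma b_eq_choose {m k : ℕ} (hk : k ≤ m) :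
    b m k = ((m.factorial : ℝ)) ^ 2 * (((2 * m).choose (m + k) : ℕ) : ℝ) /
      (((2 * m).factorial : ℕ) : ℝ) := by
  have h := Nat.choose_mul_factorial_mul_factorial (show m + k ≤ 2 * m by omega)
  have h2 : 2 * m - (m + k) = m - k := by omega
  rw [h2] at h
  have hcast : (((2 * m).choose (m + k) : ℕ) : ℝ) * ((m + k).factorial : ℝ) *
      ((m - k).factorial : ℝ) = ((2 * m).factorial : ℝ) := by exact_mod_cast h
  rw [b, eq_div_iff (Nat.cast_ne_zero.mpr (2 * m).factorial_ne_zero), div_mul_eq_mul_div,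
    div_eq_iff (by positivity)]
  rw [← hcast]
  ring

lemma stg_half {m : ℕ} (hm : 1 ≤ m) : Stg m = (((2 * m).choose m : ℕ) : ℝ) / 2 := by
  have halt : ∑ i ∈ Finset.range (2 * m + 1), u m i = 0 := by
    have h := Int.alternating_sum_range_choose_of_ne (n := 2 * m) (by omega)
    have h2 := congrArg (fun z : ℤ => (z : ℝ)) h
    push_cast at h2
    simpa [u] using h2
  have hA : ∑ i ∈ Finset.range (2 * m + 1), u m i
      = (∑ j ∈ Finset.range (m + 1), u m j) + ∑ i ∈ Finset.Ico (m + 1) (2 * m + 1), u m i := by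
    rw [Finset.range_eq_Ico, Finset.range_eq_Ico]
    rw [Finset.sum_Ico_consecutive (u m) (show 0 ≤ m + 1 by omega) (show m + 1 ≤ 2 * m + 1 by omega)]
  have hsplit := halt
  rw [hA, Finset.sum_range_succ] at hsplit
  have hthird : ∑ i ∈ Finset.Ico (m + 1) (2 * m + 1), u m i = (-1 : ℝ) ^ (m + 1) * Stg m := by
    rw [Finset.sum_Ico_eq_sum_range]
    have h2 : 2 * m + 1 - (m + 1) = m := by omega
    rw [h2, Stg, Finset.mul_sum]
    refine Finset.sum_congr rfl fun j _ => ?_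
    rw [u, pow_add]
    ring
  have hrefl : (-1 : ℝ) ^ (m + 1) * (∑ j ∈ Finset.range m, u m j) = Stg m := by
    rw [Stg, ← Finset.sum_range_reflect (fun j => (-1 : ℝ) ^ j *
      (((2 * m).choose (m + 1 + j) : ℕ) : ℝ)) m, Finset.mul_sum]
    refine Finset.sum_congr rfl fun j hj => ?_
    rw [Finset.mem_range] at hj
    have e1 : m + 1 + (m - 1 - j) = 2 * m - j := by omega
    have e2 : (2 * m).choose (2 * m - j) = (2 * m).choose j := Nat.choose_symm (by omega)
    have hsum : (m - 1 - j) + (j + 2) = m + 1 := by omega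
    have e3 : (-1 : ℝ) ^ (m - 1 - j) = (-1 : ℝ) ^ (m + 1) * (-1 : ℝ) ^ j := by
      have h5 : (-1 : ℝ) ^ (m + 1) = (-1 : ℝ) ^ (m - 1 - j) * (-1 : ℝ) ^ (j + 2) := by
        rw [← pow_add, hsum]
      have h6 : (-1 : ℝ) ^ (j + 2) = (-1 : ℝ) ^ j := by rw [pow_add]; norm_num
      rw [h5, h6, mul_assoc, ← pow_add]
      have h7 : (-1 : ℝ) ^ (j + j) = 1 := by rw [← two_mul, pow_mul]; norm_num
      rw [h7, mul_one]
    rw [e1, e2, u, e3]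
    ring
  have hS1' : (∑ j ∈ Finset.range m, u m j) = (-1 : ℝ) ^ (m + 1) * Stg m := by
    rw [← hrefl, ← mul_assoc, ← pow_add]
    have h8 : (m + 1) + (m + 1) = 2 * (m + 1) := by ring
    rw [h8, pow_mul]
    norm_num
  have hm1 : u m m = (-1 : ℝ) ^ m * (((2 * m).choose m : ℕ) : ℝ) := rfl
  rw [hS1', hthird, hm1] at hsplit
  have key : (-1 : ℝ) ^ (m + 1) * (2 * Stg m - (((2 * m).choose m : ℕ) : ℝ)) = 0 := by
    linear_combination hsplit
  have hne : ((-1 : ℝ) ^ (m + 1)) ≠ 0 := pow_ne_zero _ (by norm_num)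
  have h9 := (mul_eq_zero.mp key).resolve_left hne
  linarith

lemma sum_choose_half {m : ℕ} (hm : 1 ≤ m) :
    ∑ k ∈ Finset.Icc 1 m, (-1 : ℝ) ^ (k + 1) * (((2 * m).choose (m + k) : ℕ) : ℝ)
      = (((2 * m).choose m : ℕ) : ℝ) / 2 := by
  rw [← stg_half hm, Stg, ← Finset.Ico_add_one_right_eq_Icc, Finset.sum_Ico_eq_sum_range]
  have h2 : m + 1 - 1 = m := by omega
  rw [h2]
  refine Finset.sum_congr rfl fun j _ => ?_
  have e1 : m + (1 + j) = m + 1 + j := by omega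
  have e2 : (-1 : ℝ) ^ (1 + j + 1) = (-1 : ℝ) ^ j := by
    rw [show 1 + j + 1 = j + 2 by omega, pow_add]
    norm_num
  rw [e1, e2]

lemma R_zero {m : ℕ} (hm : 1 ≤ m) : R m 0 = 1 := by
  have hcm : (((2 * m).choose m : ℕ) : ℝ) * ((m.factorial : ℝ)) ^ 2
      = ((2 * m).factorial : ℝ) := by
    have h := Nat.choose_mul_factorial_mul_factorial (show m ≤ 2 * m by omega)
    have h2 : 2 * m - m = m := by omega
    rw [h2] at h
    have h3 : (((2 * m).choose m : ℕ) : ℝ) * (m.factorial : ℝ) * (m.factorial : ℝ)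
        = ((2 * m).factorial : ℝ) := by exact_mod_cast h
    rw [← h3]; ring
  have hfac : (((2 * m).factorial : ℕ) : ℝ) ≠ 0 := Nat.cast_ne_zero.mpr (2 * m).factorial_ne_zero
  rw [R]
  have hterm : ∀ k ∈ Finset.Icc 1 m, (-1 : ℝ) ^ (k + 1) * b m k / (k : ℝ) ^ (2 * 0)
      = ((m.factorial : ℝ)) ^ 2 / ((2 * m).factorial : ℝ) *
        ((-1 : ℝ) ^ (k + 1) * (((2 * m).choose (m + k) : ℕ) : ℝ)) := by
    intro k hk
    rw [Finset.mem_Icc] at hk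
    rw [mul_zero, pow_zero, div_one, b_eq_choose hk.2]
    ring
  rw [Finset.sum_congr rfl hterm, ← Finset.mul_sum, sum_choose_half hm]
  have h : 2 * ((m.factorial : ℝ) ^ 2 / ((2 * m).factorial : ℝ) *
      ((((2 * m).choose m : ℕ) : ℝ) / 2))
      = ((((2 * m).choose m : ℕ) : ℝ) * (m.factorial : ℝ) ^ 2) / ((2 * m).factorial : ℝ) := by
    ring
  rw [h, hcm, div_self hfac]



def E (n : ℕ) : ℝ := ∑' k : ℕ, (-1 : ℝ) ^ (k + 1) / (k : ℝ) ^ (2 * n)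

lemma tendsto_R (n : ℕ) : Tendsto (fun m => R m (n + 1)) atTop (𝓝 (2 * E (n + 1))) := by
  set p := 2 * (n + 1) with hp
  set F : ℕ → ℕ → ℝ := fun m k =>
    if k ∈ Finset.Icc 1 m then (-1 : ℝ) ^ (k + 1) * b m k / (k : ℝ) ^ p else 0 with hF
  have hsummable : Summable (fun k : ℕ => 1 / (k : ℝ) ^ p) :=
    Real.summable_one_div_nat_pow.mpr (by omega)
  have hpointwise : ∀ k : ℕ, Tendsto (fun m => F m k) atTop
      (𝓝 ((-1 : ℝ) ^ (k + 1) / (k : ℝ) ^ p)) := by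
    intro k
    rcases Nat.eq_zero_or_pos k with rfl | hk
    · have hz : ∀ m, F m 0 = 0 := fun m => by simp [hF]
      have h0 : ((-1 : ℝ)) ^ (0 + 1) / ((0 : ℕ) : ℝ) ^ p = 0 := by
        rw [Nat.cast_zero, zero_pow (by omega), div_zero]
      simp only [hz, h0]
      exact tendsto_const_nhds
    · have hlim : Tendsto (fun m => (-1 : ℝ) ^ (k + 1) * b m k / (k : ℝ) ^ p) atTop
          (𝓝 ((-1 : ℝ) ^ (k + 1) / (k : ℝ) ^ p)) := by
        have h1 := ((b_tendsto k).const_mul ((-1 : ℝ) ^ (k + 1))).div_const ((k : ℝ) ^ p)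
        rw [mul_one] at h1
        exact h1
      refine hlim.congr' ?_
      filter_upwards [eventually_ge_atTop k] with m hm
      rw [hF]
      simp only [Finset.mem_Icc]
      rw [if_pos ⟨hk, hm⟩]
  have hbound : ∀ᶠ m in atTop, ∀ k, ‖F m k‖ ≤ 1 / (k : ℝ) ^ p := by
    refine Eventually.of_forall fun m k => ?_
    rw [hF]
    simp only [Finset.mem_Icc]
    split_ifs with h
    · rw [norm_div, norm_mul, norm_pow, norm_neg, norm_one, one_pow, one_mul]
      have hk0 : (0 : ℝ) < (k : ℝ) := by exact_mod_cast h.1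
      have hkp : (0 : ℝ) < (k : ℝ) ^ p := by positivity
      rw [Real.norm_eq_abs, Real.norm_eq_abs, abs_of_nonneg (b_nonneg m k),
        abs_of_nonneg hkp.le]
      exact (div_le_div_iff_of_pos_right hkp).mpr (b_le_one h.2)
    · simp only [norm_zero]
      positivity
  have main := tendsto_tsum_of_dominated_convergence hsummable hpointwise hbound
  have hR : ∀ m, R m (n + 1) = 2 * ∑' k, F m k := by
    intro m
    rw [R]
    congr 1
    rw [tsum_eq_sum (s := Finset.Icc 1 m) (fun k hk => by rw [hF]; simp only []; rw [if_neg hk])]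
    exact (Finset.sum_congr rfl fun k hk => by rw [hF]; simp only []; rw [if_pos hk]).symm
  simp only [hR]
  rw [E]
  exact main.const_mul 2

set_option maxHeartbeats 1600000 in
lemma E_eq (n : ℕ) (Z : ℝ) (hZ : HasSum (fun k : ℕ => 1 / (k : ℝ) ^ (2 * (n + 1))) Z) :
    E (n + 1) = (1 - 2 / 2 ^ (2 * (n + 1))) * Z := by
  set p := 2 * (n + 1) with hp
  have hp1 : 1 < p := by omega
  have hZs : Summable (fun k : ℕ => 1 / (k : ℝ) ^ p) := hZ.summable
  set f : ℕ → ℝ := fun k => (-1 : ℝ) ^ (k + 1) / (k : ℝ) ^ p with hf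
  have hfs : Summable f := by
    apply hZs.of_norm_bounded
    intro k
    rw [hf]
    simp only [norm_div, norm_pow, norm_neg, norm_one, one_pow, one_div]
    rw [Real.norm_eq_abs, abs_of_nonneg (by positivity)]
  have heven : ∀ k : ℕ, f (2 * k) = -(1 / 2 ^ p * (1 / (k : ℝ) ^ p)) := by
    intro k
    rw [hf]
    simp only []
    have h1 : (-1 : ℝ) ^ (2 * k + 1) = -1 := by
      rw [pow_succ, pow_mul]
      norm_num
    have h2 : ((2 * k : ℕ) : ℝ) ^ p = 2 ^ p * (k : ℝ) ^ p := by
      push_cast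
      rw [mul_pow]
    rw [h1, h2]
    rcases Nat.eq_zero_or_pos k with rfl | hk
    · simp [zero_pow (show p ≠ 0 by omega)]
    · have hk0 : (0 : ℝ) < (k : ℝ) := by exact_mod_cast hk
      have : ((k : ℝ)) ^ p ≠ 0 := by positivity
      field_simp
  have hodd : ∀ k : ℕ, f (2 * k + 1) = 1 / ((2 * k + 1 : ℕ) : ℝ) ^ p := by
    intro k
    rw [hf]
    simp only []
    have h1 : (-1 : ℝ) ^ (2 * k + 1 + 1) = 1 := by
      rw [show 2 * k + 1 + 1 = 2 * (k + 1) by ring, pow_mul]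
      norm_num
    rw [h1]
  have hinj2 : Function.Injective (fun k : ℕ => 2 * k) := fun a c h => by dsimp at h; omega
  have hinj21 : Function.Injective (fun k : ℕ => 2 * k + 1) := fun a c h => by dsimp at h; omega
  have hse : Summable (fun k : ℕ => f (2 * k)) := hfs.comp_injective hinj2
  have hso : Summable (fun k : ℕ => f (2 * k + 1)) := hfs.comp_injective hinj21
  have hze : Summable (fun k : ℕ => 1 / ((2 * k : ℕ) : ℝ) ^ p) := hZs.comp_injective hinj2
  have hzo : Summable (fun k : ℕ => 1 / ((2 * k + 1 : ℕ) : ℝ) ^ p) := hZs.comp_injective hinj21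
  have hzsplit := tsum_even_add_odd (f := fun j : ℕ => 1 / (j : ℝ) ^ p) hze hzo
  rw [hZ.tsum_eq] at hzsplit
  have hzeeval : ∑' k : ℕ, 1 / ((2 * k : ℕ) : ℝ) ^ p = 1 / 2 ^ p * Z := by
    rw [← hZ.tsum_eq, ← tsum_mul_left]
    congr 1
    funext k
    have h2 : ((2 * k : ℕ) : ℝ) ^ p = 2 ^ p * (k : ℝ) ^ p := by
      push_cast
      rw [mul_pow]
    rw [h2]
    rcases Nat.eq_zero_or_pos k with rfl | hk
    · simp [zero_pow (show p ≠ 0 by omega)]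
    · have hk0 : (0 : ℝ) < (k : ℝ) := by exact_mod_cast hk
      have : ((k : ℝ)) ^ p ≠ 0 := by positivity
      field_simp
  have he2 : ∑' k : ℕ, f (2 * k) = -(1 / 2 ^ p * Z) := by
    simp only [heven]
    rw [tsum_neg, tsum_mul_left, hZ.tsum_eq]
  have ho2 : ∑' k : ℕ, f (2 * k + 1) = Z - 1 / 2 ^ p * Z := by
    simp only [hodd]
    rw [hzeeval] at hzsplit
    linarith
  have hE : E (n + 1) = (∑' k : ℕ, f (2 * k)) + ∑' k : ℕ, f (2 * k + 1) :=
    (tsum_even_add_odd (f := f) hse hso).symm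
  rw [hE, he2, ho2]
  have h2p : (2 : ℝ) ^ p ≠ 0 := by positivity
  field_simp
  ring

lemma T_eq_R : ∀ m n : ℕ, T (n + 1) m = R m (n + 1) := by
  intro m
  induction m with
  | zero =>
      intro n
      rw [T_succ_zero, R]
      simp
  | succ m ihm =>
      intro n
      induction n with
      | zero =>
          rw [T_rec 0 m, ihm 0, T_zero, R_rec m 0, R_zero (by omega)]
      | succ n ihn =>
          rw [T_rec (n + 1) m, ihm (n + 1), ihn, R_rec m (n + 1)]

end HIS

open HIS in
/-- The `n`-th complete homogeneous symmetric function of `(1/1², 1/2², …)`, as a sum over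
weakly increasing `n`-tuples of positive integers. -/
theorem hsymm_inv_squares (n : ℕ) :
    (∑' f : {f : Fin n → ℕ+ // Monotone f}, ∏ k : Fin n, (1 : ℝ) / ((f.1 k : ℕ) : ℝ) ^ 2)
      = (-1 : ℝ) ^ n * π ^ (2 * n) / (Nat.factorial (2 * n) : ℝ) * (2 - 2 ^ (2 * n)) *
          ((bernoulli (2 * n) : ℚ) : ℝ) := by
  have hconv : (∑' f : {f : Fin n → ℕ+ // Monotone f}, ∏ k : Fin n,
      (1 : ℝ) / ((f.1 k : ℕ) : ℝ) ^ 2)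
      = ∑' f : {f : Fin n → ℕ+ // Monotone f}, term n f.1 := rfl
  rw [hconv]
  cases n with
  | zero =>
      rw [tsum_eq_single (⟨fun k => k.elim0, fun a b _ => a.elim0⟩ :
          {f : Fin 0 → ℕ+ // Monotone f}) ?_]
      · rw [term]
        norm_num
      · intro f hf
        exact absurd (Subtype.ext (funext fun k => k.elim0)) hf
  | succ n =>
      have h1 := tendsto_T (n + 1)
      have h1' := h1.congr (fun m => T_eq_R m n)
      have h3 := tendsto_R n
      have huniq := tendsto_nhds_unique h1' h3
      rw [huniq]
      have hZ := hasSum_zeta_nat (k := n + 1) (by omega)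
      have hE := E_eq n _ hZ
      rw [hE]
      have hexp : 2 * (n + 1) - 1 = 2 * n + 1 := by omega
      rw [hexp]
      have hK : ((2 * (n + 1)).factorial : ℝ) ≠ 0 :=
        Nat.cast_ne_zero.mpr (2 * (n + 1)).factorial_ne_zero
      have h2p : (2 : ℝ) ^ (2 * (n + 1)) ≠ 0 := by positivity
      field_simp
      ring
end
end

section
/- For every positive integer n, B_{2n} · 2^{2n-1} = ∑_{j=0}^{n} C(2n, 2j-1) · B_{2j} · (2^{2j-1} - 1), where C(2n, 2j-1) is the binomial coefficient (taken to be 0 when 2j-1 < 0 or 2j-1 > 2n). -/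
open Finset Nat PowerSeries

lemma key_ps : rescale (2:ℚ) (bernoulliPowerSeries ℚ) * (exp ℚ + 1)
    = C (R := ℚ) 2 * bernoulliPowerSeries ℚ := by
  have hexp : exp ℚ - 1 ≠ 0 := by
    simp only [PowerSeries.ext_iff, Ne, not_forall]
    use 1
    simp [coeff_exp, factorial_ne_zero]
  apply mul_right_cancel₀ hexp
  have h1 : (exp ℚ + 1) * (exp ℚ - 1) = exp ℚ ^ 2 - 1 := by ring
  have h2 : exp ℚ ^ 2 = rescale ((2:ℕ):ℚ) (exp ℚ) := exp_pow_eq_rescale_exp 2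
  calc rescale (2:ℚ) (bernoulliPowerSeries ℚ) * (exp ℚ + 1) * (exp ℚ - 1)
      = rescale (2:ℚ) (bernoulliPowerSeries ℚ) * (rescale (2:ℚ) (exp ℚ) - 1) := by
        rw [mul_assoc, h1, h2]; norm_num
    _ = rescale (2:ℚ) (bernoulliPowerSeries ℚ * (exp ℚ - 1)) := by
        rw [map_mul, map_sub, map_one]
    _ = rescale (2:ℚ) X := by rw [bernoulliPowerSeries_mul_exp_sub_one]
    _ = C (R := ℚ) 2 * X := by
        ext m
        simp only [coeff_rescale, coeff_C_mul, coeff_X]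
        split
        · rename_i h; subst h; norm_num
        · simp
    _ = C (R := ℚ) 2 * bernoulliPowerSeries ℚ * (exp ℚ - 1) := by
        rw [mul_assoc, bernoulliPowerSeries_mul_exp_sub_one]

lemma sum_choose_two_pow (N : ℕ) :
    ∑ k ∈ range (N+1), (N.choose k : ℚ) * 2 ^ k * bernoulli k
      = (2 - 2 ^ N) * bernoulli N := by
  have hc := congrArg (coeff (R := ℚ) N) key_ps
  rw [mul_add, mul_one, map_add, coeff_mul,
    Finset.Nat.sum_antidiagonal_eq_sum_range_succ_mk] at hc
  simp only [bernoulliPowerSeries, coeff_rescale, coeff_mk, coeff_exp,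
    Algebra.algebraMap_self, map_natCast, RingHom.id_apply, one_div, coeff_C_mul,
    Nat.succ_eq_add_one] at hc
  have hfa : ∀ k ∈ range (N+1), (N.choose k : ℚ) * 2 ^ k * bernoulli k
      = 2 ^ k * (bernoulli k / (k ! : ℚ)) * (((N - k)! : ℚ))⁻¹ * (N ! : ℚ) := by
    intro k hk
    rw [mem_range] at hk
    have hk' : k ≤ N := by omega
    have hcf : (N.choose k : ℚ) * k ! * (N - k)! = N ! := by
      exact_mod_cast congrArg (Nat.cast : ℕ → ℚ)
        (Nat.choose_mul_factorial_mul_factorial hk')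
    have h1 : (k ! : ℚ) ≠ 0 := mod_cast factorial_ne_zero k
    have h2 : (((N - k)!) : ℚ) ≠ 0 := mod_cast factorial_ne_zero (N - k)
    field_simp
    rw [← hcf]; ring
  rw [Finset.sum_congr rfl hfa, ← Finset.sum_mul]
  have h3 : (∑ x ∈ range (N + 1), 2 ^ x * (bernoulli x / (x ! : ℚ)) * (((N - x)!:ℚ))⁻¹)
      = 2 * (bernoulli N / (N ! : ℚ)) - 2 ^ N * (bernoulli N / (N ! : ℚ)) := by
    linarith [hc]
  rw [h3]
  have h4 : (N ! : ℚ) ≠ 0 := mod_cast factorial_ne_zero N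
  field_simp

lemma sum_choose_bern (N : ℕ) (hN : N ≠ 1) :
    ∑ k ∈ range (N+1), (N.choose k : ℚ) * bernoulli k = bernoulli N := by
  rw [Finset.sum_range_succ, sum_bernoulli, if_neg hN]
  simp

lemma shift_sum (N : ℕ) (f : ℕ → ℚ) :
    ∑ m ∈ range N, (N.choose m : ℚ) * f (m+1)
      = ∑ k ∈ range (N+2), ((N+1).choose k : ℚ) * f k
        - ∑ k ∈ range (N+1), (N.choose k : ℚ) * f k - f (N+1) := by
  rw [Finset.sum_range_succ' (fun k => (N.choose k : ℚ) * f k) N,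
    Finset.sum_range_succ' (fun k => ((N+1).choose k : ℚ) * f k) (N+1),
    Finset.sum_range_succ (fun m => ((N+1).choose (m+1) : ℚ) * f (m+1)) N]
  have h : ∀ m ∈ range N, (N.choose m : ℚ) * f (m+1)
      = ((N+1).choose (m+1) : ℚ) * f (m+1) - (N.choose (m+1) : ℚ) * f (m+1) := by
    intro m _
    rw [Nat.choose_succ_succ]
    push_cast; ring
  rw [Finset.sum_congr rfl h, Finset.sum_sub_distrib]
  simp
  ring

lemma bern_odd_zero {k : ℕ} (h : Odd k) (h1 : 1 < k) : bernoulli k = 0 := by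
  rw [bernoulli_eq_bernoulli'_of_ne_one (by omega), bernoulli'_eq_zero_of_odd h h1]

theorem bernoulli_recurrence_reverse (n : ℕ) (hn : 0 < n) :
    (bernoulli (2 * n)) * 2 ^ (2 * n - 1) =
      ∑ j ∈ Finset.Icc 1 n,
        ((Nat.choose (2 * n) (2 * j - 1) : ℚ)) * bernoulli (2 * j) * (2 ^ (2 * j - 1) - 1) := by
  have hS : ∑ j ∈ Finset.Icc 1 n,
        ((Nat.choose (2 * n) (2 * j - 1) : ℚ)) * bernoulli (2 * j) * (2 ^ (2 * j - 1) - 1)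
      = ∑ m ∈ range (2 * n), ((2 * n).choose m : ℚ) * bernoulli (m + 1) * (2 ^ m - 1) := by
    have hfil : ∑ m ∈ (range (2 * n)).filter (fun m => ¬ Even m),
          ((2 * n).choose m : ℚ) * bernoulli (m + 1) * (2 ^ m - 1)
        = ∑ m ∈ range (2 * n), ((2 * n).choose m : ℚ) * bernoulli (m + 1) * (2 ^ m - 1) := by
      apply Finset.sum_filter_of_ne
      intro m hm h0
      by_contra hev
      have hev : Even m := by tauto
      apply h0
      rcases Nat.eq_zero_or_pos m with h | h
      · subst h; norm_num
      · have hb : bernoulli (m + 1) = 0 := by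
          refine bern_odd_zero (Nat.odd_iff.mpr ?_) (by omega)
          have := Nat.even_iff.mp hev
          omega
        rw [hb]; ring
    rw [← hfil]
    refine Finset.sum_nbij' (fun j => 2 * j - 1) (fun m => (m + 1) / 2) ?_ ?_ ?_ ?_ ?_
    · intro j hj
      simp only [Finset.mem_Icc] at hj
      simp only [Finset.mem_filter, Finset.mem_range, Nat.not_even_iff]
      omega
    · intro m hm
      simp only [Finset.mem_filter, Finset.mem_range, Nat.not_even_iff] at hm
      simp only [Finset.mem_Icc]
      omega
    · intro j hj
      simp only [Finset.mem_Icc] at hj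
      omega
    · intro m hm
      simp only [Finset.mem_filter, Finset.mem_range, Nat.not_even_iff] at hm
      omega
    · intro j hj
      simp only [Finset.mem_Icc] at hj
      rw [show 2 * j - 1 + 1 = 2 * j from by omega]
  have hodd : bernoulli (2 * n + 1) = 0 :=
    bern_odd_zero (Nat.odd_iff.mpr (by omega)) (by omega)
  have A1 : ∑ k ∈ range (2 * n + 2), ((2 * n + 1).choose k : ℚ) * (bernoulli k * 2 ^ k)
      = (2 - 2 ^ (2 * n + 1)) * bernoulli (2 * n + 1) := by
    rw [show 2 * n + 2 = (2 * n + 1) + 1 from by omega, ← sum_choose_two_pow (2 * n + 1)]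
    exact Finset.sum_congr rfl fun k _ => by ring
  have A0 : ∑ k ∈ range (2 * n + 1), ((2 * n).choose k : ℚ) * (bernoulli k * 2 ^ k)
      = (2 - 2 ^ (2 * n)) * bernoulli (2 * n) := by
    rw [← sum_choose_two_pow (2 * n)]
    exact Finset.sum_congr rfl fun k _ => by ring
  have B1 : ∑ k ∈ range (2 * n + 2), ((2 * n + 1).choose k : ℚ) * bernoulli k
      = bernoulli (2 * n + 1) := by
    rw [show 2 * n + 2 = (2 * n + 1) + 1 from by omega]
    exact sum_choose_bern (2 * n + 1) (by omega)
  have B0 : ∑ k ∈ range (2 * n + 1), ((2 * n).choose k : ℚ) * bernoulli k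
      = bernoulli (2 * n) := sum_choose_bern (2 * n) (by omega)
  have e2 : ∑ m ∈ range (2 * n), ((2 * n).choose m : ℚ) * (bernoulli (m + 1) * 2 ^ (m + 1))
      = ∑ k ∈ range (2 * n + 2), ((2 * n + 1).choose k : ℚ) * (bernoulli k * 2 ^ k)
        - ∑ k ∈ range (2 * n + 1), ((2 * n).choose k : ℚ) * (bernoulli k * 2 ^ k)
        - bernoulli (2 * n + 1) * 2 ^ (2 * n + 1) :=
    shift_sum (2 * n) (fun k => bernoulli k * 2 ^ k)
  have e1 : ∑ m ∈ range (2 * n), ((2 * n).choose m : ℚ) * bernoulli (m + 1)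
      = ∑ k ∈ range (2 * n + 2), ((2 * n + 1).choose k : ℚ) * bernoulli k
        - ∑ k ∈ range (2 * n + 1), ((2 * n).choose k : ℚ) * bernoulli k
        - bernoulli (2 * n + 1) :=
    shift_sum (2 * n) (fun k => bernoulli k)
  rw [A1, A0, hodd] at e2
  rw [B1, B0, hodd] at e1
  have hsplit : ∑ m ∈ range (2 * n), ((2 * n).choose m : ℚ) * bernoulli (m + 1) * (2 ^ m - 1)
      = (∑ m ∈ range (2 * n), ((2 * n).choose m : ℚ) * (bernoulli (m + 1) * 2 ^ (m + 1))) / 2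
        - ∑ m ∈ range (2 * n), ((2 * n).choose m : ℚ) * bernoulli (m + 1) := by
    rw [Finset.sum_div, ← Finset.sum_sub_distrib]
    refine Finset.sum_congr rfl fun m _ => ?_
    rw [pow_succ]
    ring
  rw [hS, hsplit, e2, e1]
  rw [show (2 : ℚ) ^ (2 * n) = 2 ^ (2 * n - 1) * 2 from by
    rw [← pow_succ]; congr 1; omega]
  ring
end

section
/- For every positive integer n, 2n + 1 = ∑_{j=0}^{n} C(2n+1, 2j) · B_{2j} · 2^{2j} (Ramanujan's Bernoulli number identity). -/
open PowerSeries Finset Nat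

private lemma sum_range_two_mul (f : ℕ → ℚ) (m : ℕ) :
    ∑ k ∈ Finset.range (2 * m), f k =
      ∑ j ∈ Finset.range m, f (2 * j) + ∑ j ∈ Finset.range m, f (2 * j + 1) := by
  induction m with
  | zero => simp
  | succ m ih =>
    rw [Nat.mul_succ, Finset.sum_range_succ, Finset.sum_range_succ,
      Finset.sum_range_succ, Finset.sum_range_succ, ih]
    ring

private lemma exp_sub_one_ne_zero : (exp ℚ - 1) ≠ 0 := by
  intro h
  have := congrArg (PowerSeries.coeff 1) h
  simp [coeff_exp] at this

private lemma rescale_neg_one_G :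
    PowerSeries.rescale (-1 : ℚ)
        (PowerSeries.mk fun n => (Polynomial.aeval (1/2 : ℚ)) ((1 / n ! : ℚ) • Polynomial.bernoulli n)) =
      PowerSeries.mk fun n => (Polynomial.aeval (1/2 : ℚ)) ((1 / n ! : ℚ) • Polynomial.bernoulli n) := by
  set G : PowerSeries ℚ :=
    PowerSeries.mk fun n => (Polynomial.aeval (1/2 : ℚ)) ((1 / n ! : ℚ) • Polynomial.bernoulli n) with hG
  have H := Polynomial.bernoulli_generating_function (1/2 : ℚ)
  rw [← hG] at H
  have H2 := congrArg (PowerSeries.rescale (-1 : ℚ)) H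
  rw [map_mul, map_sub, map_one, map_mul, rescale_X, rescale_rescale] at H2
  -- multiply both sides by (- exp ℚ)
  have key : PowerSeries.rescale (-1 : ℚ) G * (exp ℚ - 1) = G * (exp ℚ - 1) := by
    have H3 := congrArg (· * (-(exp ℚ))) H2
    have e1 : (PowerSeries.rescale (-1 : ℚ) (exp ℚ) - 1) * (-(exp ℚ)) = exp ℚ - 1 := by
      have : PowerSeries.rescale (-1 : ℚ) (exp ℚ) * exp ℚ = 1 := by
        have := PowerSeries.exp_mul_exp_eq_exp_add (-1 : ℚ) 1
        rwa [rescale_one, RingHom.id_apply, neg_add_cancel, rescale_zero,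
          RingHom.comp_apply, constantCoeff_exp, map_one] at this
      linear_combination -this
    have e2 : PowerSeries.C (-1 : ℚ) * PowerSeries.X * PowerSeries.rescale (1/2 * -1 : ℚ) (exp ℚ)
        * (-(exp ℚ)) = PowerSeries.X * PowerSeries.rescale (1/2 : ℚ) (exp ℚ) := by
      have : PowerSeries.rescale (1/2 * -1 : ℚ) (exp ℚ) * exp ℚ
          = PowerSeries.rescale (1/2 : ℚ) (exp ℚ) := by
        have := PowerSeries.exp_mul_exp_eq_exp_add (1/2 * -1 : ℚ) 1
        rw [rescale_one, RingHom.id_apply] at this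
        rw [this]; norm_num
      calc PowerSeries.C (-1 : ℚ) * PowerSeries.X * PowerSeries.rescale (1/2 * -1 : ℚ) (exp ℚ)
          * (-(exp ℚ))
          = PowerSeries.C (-1 : ℚ) * -1 * PowerSeries.X *
              (PowerSeries.rescale (1/2 * -1 : ℚ) (exp ℚ) * exp ℚ) := by ring
        _ = PowerSeries.X * PowerSeries.rescale (1/2 : ℚ) (exp ℚ) := by
              rw [this]; simp
    rw [mul_assoc, e1, e2, ← H] at H3
    exact H3
  exact mul_right_cancel₀ exp_sub_one_ne_zero key

private lemma bernoulli_poly_eval_half (m : ℕ) (hm : Odd m) :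
    (Polynomial.bernoulli m).eval (1/2 : ℚ) = 0 := by
  have h := congrArg (PowerSeries.coeff m) rescale_neg_one_G
  simp only [coeff_rescale, coeff_mk] at h
  rw [hm.neg_one_pow] at h
  have h2 : (Polynomial.aeval (1/2 : ℚ)) ((1 / m ! : ℚ) • Polynomial.bernoulli m) = 0 := by
    linarith
  rw [map_smul, smul_eq_mul, Polynomial.coe_aeval_eq_eval] at h2
  rcases mul_eq_zero.mp h2 with h3 | h3
  · exact absurd h3 (by positivity)
  · exact h3

private lemma full_sum_eq_zero (m : ℕ) (hm : Odd m) :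
    ∑ i ∈ Finset.range (m + 1), (bernoulli i) * (Nat.choose m i : ℚ) * 2 ^ i = 0 := by
  have h0 := bernoulli_poly_eval_half m hm
  rw [Polynomial.bernoulli, Polynomial.eval_finset_sum] at h0
  simp only [Polynomial.eval_monomial] at h0
  have h1 := congrArg (· * (2 : ℚ) ^ m) h0
  simp only [Finset.sum_mul, zero_mul] at h1
  rw [← h1]
  apply Finset.sum_congr rfl
  intro i hi
  rw [Finset.mem_range] at hi
  have hi' : i ≤ m := Nat.lt_succ_iff.mp hi
  have : ((1:ℚ)/2) ^ (m - i) * 2 ^ m = 2 ^ i := by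
    rw [div_pow, one_pow, div_mul_eq_mul_div, one_mul,
      div_eq_iff (by positivity), ← pow_add, Nat.add_sub_cancel' hi']
  conv_rhs => rw [mul_assoc, this]

private lemma bernoulli_odd_eq_zero' (j : ℕ) (hj : 1 ≤ j) : bernoulli (2 * j + 1) = 0 := by
  rw [bernoulli_eq_bernoulli'_of_ne_one (by omega)]
  exact bernoulli'_eq_zero_of_odd ⟨j, by ring⟩ (by omega)

theorem ramanujan_bernoulli (n : ℕ) (hn : 0 < n) :
    (2 * n + 1 : ℚ) =
      ∑ j ∈ Finset.range (n + 1),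
        ((Nat.choose (2 * n + 1) (2 * j) : ℚ)) * bernoulli (2 * j) * 2 ^ (2 * j) := by
  set m := 2 * n + 1 with hm
  set f : ℕ → ℚ := fun k => (Nat.choose m k : ℚ) * bernoulli k * 2 ^ k with hf
  have hfull : ∑ k ∈ Finset.range (2 * (n + 1)), f k = 0 := by
    have := full_sum_eq_zero m ⟨n, by omega⟩
    have hr : 2 * (n + 1) = m + 1 := by omega
    rw [hr]
    rw [← this]
    apply Finset.sum_congr rfl
    intro i _
    simp only [hf]; ring
  have hsplit := sum_range_two_mul f (n + 1)
  rw [hfull] at hsplit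
  have hodd : ∑ j ∈ Finset.range (n + 1), f (2 * j + 1) = -(m : ℚ) := by
    rw [Finset.sum_eq_single 0]
    · simp only [hf, mul_zero, zero_add, Nat.choose_one_right, bernoulli_one, pow_one]
      push_cast
      ring
    · intro j _ hj
      simp only [hf, bernoulli_odd_eq_zero' j (Nat.one_le_iff_ne_zero.mpr hj), mul_zero, zero_mul]
    · intro h; exact absurd (Finset.mem_range.mpr (by omega)) h
  rw [hodd] at hsplit
  have : ∑ j ∈ Finset.range (n + 1), f (2 * j) = (m : ℚ) := by linarith
  have hcast : (2 * (n:ℚ) + 1) = (m : ℚ) := by rw [hm]; push_cast; ring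
  rw [hcast, ← this]
end

section
/- For every integer n ≥ 2, ∑_{j=1}^{n-1} C(2n, 2j) · B_{2j} · B_{2n-2j} = -(2n+1) · B_{2n} (Euler's convolution identity for Bernoulli numbers). -/
open PowerSeries Finset

private lemma dexp' : d⁄dX ℚ (exp ℚ) = exp ℚ := by
  ext n
  rw [coeff_derivative, coeff_exp, coeff_exp]
  simp only [Algebra.algebraMap_self, RingHom.id_apply]
  field_simp [Nat.factorial_succ]
  rw [Nat.factorial_succ]; push_cast; ring

private lemma series_id' :
    bernoulliPowerSeries ℚ * bernoulliPowerSeries ℚ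
      = (1 - X) * bernoulliPowerSeries ℚ - X * d⁄dX ℚ (bernoulliPowerSeries ℚ) := by
  set B := bernoulliPowerSeries ℚ
  set E : ℚ⟦X⟧ := exp ℚ - 1
  have hBE : B * E = X := bernoulliPowerSeries_mul_exp_sub_one ℚ
  have hE : E ≠ 0 := by
    intro h
    have := congrArg (coeff 1) h
    simp [E, coeff_exp] at this
  have hD : d⁄dX ℚ B * E + B * exp ℚ = 1 := by
    have := congrArg (d⁄dX ℚ) hBE
    rw [Derivation.leibniz, derivative_X] at this
    have hE' : d⁄dX ℚ E = exp ℚ := by simp [E, dexp']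
    rw [hE'] at this
    rw [smul_eq_mul, smul_eq_mul] at this
    linear_combination this
  have key : (B * B) * (E * E) = ((1 - X) * B - X * d⁄dX ℚ B) * (E * E) := by
    have h1 : (B * B) * (E * E) = X * X := by
      rw [mul_mul_mul_comm, hBE]
    have h2 : X * (d⁄dX ℚ B) * E * E = X * E - X * X * exp ℚ := by
      have hh : d⁄dX ℚ B * E = 1 - B * exp ℚ := by linear_combination hD
      calc X * (d⁄dX ℚ B) * E * E = X * ((d⁄dX ℚ B) * E) * E := by ring
        _ = X * (1 - B * exp ℚ) * E := by rw [hh]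
        _ = X * E - X * (B * E) * exp ℚ := by ring
        _ = X * E - X * X * exp ℚ := by rw [hBE]
    have h3 : ((1 - X) * B - X * d⁄dX ℚ B) * (E * E)
        = (1 - X) * (B * E) * E - (X * (d⁄dX ℚ B) * E * E) := by ring
    rw [h3, h2, hBE, h1]
    have hXE : (exp ℚ : ℚ⟦X⟧) = E + 1 := by simp [E]
    rw [hXE]; ring
  exact mul_right_cancel₀ (mul_ne_zero hE hE) key

private lemma conv' (n : ℕ) :
    ∑ k ∈ range (n + 2), ((n + 1).choose k : ℚ) * bernoulli k * bernoulli (n + 1 - k)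
      = (1 - (n + 1 : ℚ)) * bernoulli (n + 1) - (n + 1 : ℚ) * bernoulli n := by
  have h := congrArg (coeff (n + 1)) series_id'
  rw [coeff_mul, Finset.Nat.sum_antidiagonal_eq_sum_range_succ_mk] at h
  simp only [bernoulliPowerSeries, coeff_mk, map_sub, sub_mul, one_mul,
    coeff_succ_X_mul, coeff_derivative] at h
  simp only [Algebra.algebraMap_self, RingHom.id_apply] at h
  have h2 := congrArg (fun x : ℚ => ((n+1).factorial : ℚ) * x) h
  simp only [Finset.mul_sum] at h2
  have fac : ((n+1).factorial : ℚ) ≠ 0 := Nat.cast_ne_zero.2 (Nat.factorial_ne_zero _)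
  calc ∑ k ∈ range (n + 2), ((n + 1).choose k : ℚ) * bernoulli k * bernoulli (n + 1 - k)
      = ∑ k ∈ range (n + 2), ((n+1).factorial : ℚ) *
          (bernoulli k / ↑k.factorial * (bernoulli (n + 1 - k) / ↑(n + 1 - k).factorial)) := by
        refine Finset.sum_congr rfl fun k hk => ?_
        have hkn : k ≤ n + 1 := by simp at hk; omega
        rw [Nat.cast_choose ℚ hkn]
        have f1 : (k.factorial : ℚ) ≠ 0 := Nat.cast_ne_zero.2 (Nat.factorial_ne_zero _)
        have f2 : ((n+1-k).factorial : ℚ) ≠ 0 := Nat.cast_ne_zero.2 (Nat.factorial_ne_zero _)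
        field_simp
    _ = (1 - (n + 1 : ℚ)) * bernoulli (n + 1) - (n + 1 : ℚ) * bernoulli n := by
        rw [h2]
        have hfs : ((n+1).factorial : ℚ) = (n+1) * n.factorial := by
          rw [Nat.factorial_succ]; push_cast; ring
        have fn : (n.factorial : ℚ) ≠ 0 := Nat.cast_ne_zero.2 (Nat.factorial_ne_zero _)
        field_simp [hfs]
        simp only [Nat.factorial_succ, Nat.cast_mul, Nat.cast_add, Nat.cast_one]; ring

private lemma bern_odd' {k : ℕ} (hk : Odd k) (h1 : 1 < k) : bernoulli k = 0 := by
  rw [bernoulli_eq_bernoulli'_of_ne_one (by omega)]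
  exact bernoulli'_eq_zero_of_odd hk h1

private lemma sum_even' (f : ℕ → ℚ) (hodd : ∀ k, Odd k → f k = 0) (n : ℕ) :
    ∑ k ∈ range (2 * n + 1), f k = ∑ j ∈ range (n + 1), f (2 * j) := by
  induction n with
  | zero => simp
  | succ n ih =>
    rw [show 2 * (n + 1) + 1 = (2 * n + 1) + 1 + 1 by ring, sum_range_succ, sum_range_succ,
      ih, hodd (2 * n + 1) ⟨n, by ring⟩, sum_range_succ,
      show 2 * n + 1 + 1 = 2 * (n + 1) by ring]
    simp [Finset.sum_range_succ]

theorem euler_bernoulli_convolution (n : ℕ) (hn : 2 ≤ n) :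
    ∑ j ∈ Finset.Icc 1 (n - 1),
        ((Nat.choose (2 * n) (2 * j) : ℚ)) * bernoulli (2 * j) * bernoulli (2 * n - 2 * j)
      = -(2 * n + 1 : ℚ) * bernoulli (2 * n) := by
  set f : ℕ → ℚ := fun k => ((2 * n).choose k : ℚ) * bernoulli k * bernoulli (2 * n - k)
    with hf
  have hB1 : bernoulli (2 * n - 1) = 0 := by
    apply bern_odd' ⟨n - 1, by omega⟩ (by omega)
  have hodd : ∀ k, Odd k → f k = 0 := by
    intro k hk
    rcases eq_or_ne k 1 with rfl | h1
    · simp [hf, show 2 * n - 1 = 2 * n - 1 from rfl, hB1]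
    · have : bernoulli k = 0 := bern_odd' hk (by
        rcases hk with ⟨m, rfl⟩; omega)
      simp [hf, this]
  have hconv : ∑ k ∈ range (2 * n + 1), f k
      = (1 - (2 * n : ℚ)) * bernoulli (2 * n) - (2 * n : ℚ) * bernoulli (2 * n - 1) := by
    have h := conv' (2 * n - 1)
    have e1 : 2 * n - 1 + 2 = 2 * n + 1 := by omega
    have e2 : 2 * n - 1 + 1 = 2 * n := by omega
    rw [e1, e2] at h
    have e3 : ((2 * n - 1 : ℕ) : ℚ) + 1 = (2 * n : ℚ) := by
      have : ((2 * n - 1 : ℕ) : ℚ) = 2 * n - 1 := by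
        push_cast [Nat.cast_sub (by omega : 1 ≤ 2 * n)]; ring
      rw [this]; ring
    rw [e3] at h
    convert h using 2 <;> push_cast <;> ring
  rw [sum_even' f hodd n] at hconv
  have hsplit : range (n + 1) = insert 0 (insert n (Finset.Icc 1 (n - 1))) := by
    ext x
    simp only [mem_range, mem_insert, Finset.mem_Icc]
    omega
  rw [hsplit, Finset.sum_insert, Finset.sum_insert] at hconv
  · have hf0 : f (2 * 0) = bernoulli (2 * n) := by simp [hf]
    have hfn : f (2 * n) = bernoulli (2 * n) := by simp [hf]
    rw [hf0, hfn, hB1] at hconv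
    have : ∑ j ∈ Finset.Icc 1 (n - 1), f (2 * j)
        = (1 - (2 * n : ℚ)) * bernoulli (2 * n) - 2 * bernoulli (2 * n) := by
      linear_combination hconv
    rw [hf] at this
    simp only at this
    rw [this]; push_cast; ring
  · simp only [Finset.mem_Icc]; omega
  · simp only [mem_insert, Finset.mem_Icc]; omega
end

section
/- For every positive integer n, the power sum symmetric function pₙ equals the alternating sum of Schur-hooks: pₙ = ∑_{i=0}^{n-1} (-1)^i s_{(n-i, 1^i)} (the Murnaghan–Nakayama rule for a cycle). -/
open scoped Classical

/-- The `n`-th complete homogeneous symmetric function in the variables `x₀, x₁, …`,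
as a formal power series: the sum of all monomials of degree `n`. -/
noncomputable def hsym (n : ℕ) : MvPowerSeries ℕ ℚ :=
  fun d => if (d.sum fun _ k => k) = n then 1 else 0

/-- The `n`-th elementary symmetric function: the sum of all squarefree monomials
of degree `n`. -/
noncomputable def esym (n : ℕ) : MvPowerSeries ℕ ℚ :=
  fun d => if (d.sum fun _ k => k) = n ∧ ∀ i, d i ≤ 1 then 1 else 0

/-- The `n`-th power sum symmetric function `∑ⱼ xⱼⁿ`. -/
noncomputable def psym (n : ℕ) : MvPowerSeries ℕ ℚ :=
  fun d => if ∃ j, d = Finsupp.single j n then 1 else 0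

/-- `h` indexed by an integer, vanishing for negative indices. -/
noncomputable def hsymZ (k : ℤ) : MvPowerSeries ℕ ℚ :=
  if 0 ≤ k then hsym k.toNat else 0
/-- The Schur function of the hook `(a, 1^b)`, defined by the Jacobi–Trudi determinant
`det (h_{λᵢ - i + j})` for the hook partition `λ = (a, 1, …, 1)` with `b` ones. -/
noncomputable def schurHook (a b : ℕ) : MvPowerSeries ℕ ℚ :=
  Matrix.det (fun i j : Fin (b + 1) =>
    hsymZ (((if (i : ℕ) = 0 then (a : ℤ) else 1) - (i : ℕ) + (j : ℕ))))


def deg (d : ℕ →₀ ℕ) : ℕ := d.sum fun _ k => k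

lemma deg_add (d e : ℕ →₀ ℕ) : deg (d + e) = deg d + deg e :=
  Finsupp.sum_add_index' (fun _ => rfl) (fun _ _ _ => rfl)

lemma coeff_hsym (d : ℕ →₀ ℕ) (a : ℕ) :
    MvPowerSeries.coeff d (hsym a) = if deg d = a then 1 else 0 := rfl

lemma coeff_esym (d : ℕ →₀ ℕ) (a : ℕ) :
    MvPowerSeries.coeff d (esym a) = if deg d = a ∧ ∀ i, d i ≤ 1 then 1 else 0 := rfl

lemma coeff_psym (d : ℕ →₀ ℕ) (a : ℕ) :
    MvPowerSeries.coeff d (psym a) = if ∃ j, d = Finsupp.single j a then 1 else 0 := rfl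

lemma deg_eq_zero (d : ℕ →₀ ℕ) : deg d = 0 ↔ d = 0 := by
  unfold deg
  rw [Finsupp.sum, Finset.sum_eq_zero_iff]
  constructor
  · intro h; ext i
    by_cases hi : i ∈ d.support
    · exact h i hi
    · simpa using Finsupp.notMem_support_iff.mp hi
  · intro h; simp [h]

lemma hsym_zero : hsym 0 = 1 := by
  apply MvPowerSeries.ext; intro d
  rw [coeff_hsym, MvPowerSeries.coeff_one]
  simp [deg_eq_zero]

lemma esym_zero : esym 0 = 1 := by
  apply MvPowerSeries.ext; intro d
  rw [coeff_esym, MvPowerSeries.coeff_one]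
  by_cases h : d = 0
  · simp [h, deg_eq_zero]
  · rw [if_neg (by rintro ⟨h1, _⟩; exact h ((deg_eq_zero d).mp h1)), if_neg h]

lemma hsymZ_coe (a : ℕ) : hsymZ (a : ℤ) = hsym a := by
  simp [hsymZ]

lemma hsymZ_neg {k : ℤ} (h : k < 0) : hsymZ k = 0 := by
  simp [hsymZ, not_le.mpr h]

lemma card_le_deg (d : ℕ →₀ ℕ) : d.support.card ≤ deg d := by
  unfold deg Finsupp.sum
  calc d.support.card = ∑ _i ∈ d.support, 1 := by simp
  _ ≤ ∑ i ∈ d.support, d i := Finset.sum_le_sum (fun i hi => Nat.one_le_iff_ne_zero.mpr (Finsupp.mem_support_iff.mp hi))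

lemma sf_deg {d : ℕ →₀ ℕ} (h : ∀ i, d i ≤ 1) : deg d = d.support.card := by
  unfold deg Finsupp.sum
  rw [Finset.sum_congr rfl (fun i hi => le_antisymm (h i) (Nat.one_le_iff_ne_zero.mpr (Finsupp.mem_support_iff.mp hi)))]
  simp

lemma deg_eq_card_iff {d : ℕ →₀ ℕ} : deg d = d.support.card ↔ ∀ i, d i ≤ 1 := by
  constructor
  · intro h i
    by_contra hc
    push_neg at hc
    have hi : i ∈ d.support := Finsupp.mem_support_iff.mpr (by omega)
    have : ∑ _j ∈ d.support, 1 < ∑ j ∈ d.support, d j := by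
      apply Finset.sum_lt_sum
      · exact fun j hj => Nat.one_le_iff_ne_zero.mpr (Finsupp.mem_support_iff.mp hj)
      · exact ⟨i, hi, by omega⟩
    simp only [Finset.sum_const, smul_eq_mul, mul_one] at this
    have h2 : deg d = ∑ j ∈ d.support, d j := rfl
    omega
  · exact sf_deg

lemma coeff_he (d : ℕ →₀ ℕ) (a b : ℕ) :
    MvPowerSeries.coeff d (hsym a * esym b) =
      if deg d = a + b then ((d.support.card.choose b : ℕ) : ℚ) else 0 := by
  rw [MvPowerSeries.coeff_mul]
  have step : ∀ p : (ℕ →₀ ℕ) × (ℕ →₀ ℕ),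
      MvPowerSeries.coeff p.1 (hsym a) * MvPowerSeries.coeff p.2 (esym b)
      = if (deg p.1 = a ∧ deg p.2 = b ∧ ∀ i, p.2 i ≤ 1) then 1 else 0 := by
    intro p
    rw [coeff_hsym, coeff_esym]
    split_ifs <;> simp_all <;> tauto
  by_cases hd : deg d = a + b
  · rw [if_pos hd, Finset.sum_congr rfl (fun p _ => step p), Finset.sum_boole]
    norm_cast
    rw [← Finset.card_powersetCard]
    apply Finset.card_bij (fun p _ => p.2.support)
    · intro p hp
      rw [Finset.mem_filter] at hp
      obtain ⟨hmem, h1, h2, h3⟩ := hp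
      rw [Finset.HasAntidiagonal.mem_antidiagonal] at hmem
      rw [Finset.mem_powersetCard]
      constructor
      · intro i hi
        rw [Finsupp.mem_support_iff] at hi ⊢
        have : p.1 i + p.2 i = d i := by rw [← hmem, Finsupp.add_apply]
        omega
      · rw [← sf_deg h3, h2]
    · rintro ⟨p1, p2⟩ hp ⟨q1, q2⟩ hq (h : p2.support = q2.support)
      rw [Finset.mem_filter, Finset.HasAntidiagonal.mem_antidiagonal] at hp hq
      have h22 : p2 = q2 := by
        ext i
        by_cases hi : i ∈ p2.support
        · have hi' := hi; rw [h] at hi'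
          have e1 := le_antisymm (hp.2.2.2 i) (Nat.one_le_iff_ne_zero.mpr (Finsupp.mem_support_iff.mp hi))
          have e2 := le_antisymm (hq.2.2.2 i) (Nat.one_le_iff_ne_zero.mpr (Finsupp.mem_support_iff.mp hi'))
          rw [e1, e2]
        · have hi' := hi; rw [h] at hi'
          rw [Finsupp.notMem_support_iff.mp hi, Finsupp.notMem_support_iff.mp hi']
      have h11 : p1 = q1 := by
        have h0 := hp.1.trans hq.1.symm
        rw [h22] at h0
        exact add_right_cancel h0
      simp [h11, h22]
    · intro S hS
      rw [Finset.mem_powersetCard] at hS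
      obtain ⟨hSsub, hScard⟩ := hS
      set e : ℕ →₀ ℕ := Finsupp.indicator S (fun _ _ => 1) with he
      have heap : ∀ i, e i = if i ∈ S then 1 else 0 := by
        intro i; rw [he, Finsupp.indicator_apply]; split_ifs <;> rfl
      have hesupp : e.support = S := by
        ext i; rw [Finsupp.mem_support_iff, heap]; split_ifs <;> simp_all
      have hle : ∀ i, e i ≤ d i := by
        intro i; rw [heap]; split_ifs with hi
        · exact Nat.one_le_iff_ne_zero.mpr (Finsupp.mem_support_iff.mp (hSsub hi))
        · exact Nat.zero_le _
      have hsub : d - e + e = d := by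
        ext i
        simp only [Finsupp.add_apply, Finsupp.tsub_apply]
        have := hle i
        omega
      have hsf : ∀ i, e i ≤ 1 := fun i => by rw [heap]; split_ifs <;> omega
      have hdege : deg e = b := by rw [sf_deg hsf, hesupp, hScard]
      have hdegd : deg (d - e) = a := by
        have h0 := deg_add (d - e) e
        rw [hsub] at h0
        omega
      refine ⟨(d - e, e), ?_, hesupp⟩
      rw [Finset.mem_filter, Finset.HasAntidiagonal.mem_antidiagonal]
      exact ⟨hsub, hdegd, hdege, hsf⟩
  · rw [if_neg hd, Finset.sum_congr rfl (fun p _ => step p)]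
    apply Finset.sum_eq_zero
    intro p hp
    rw [Finset.HasAntidiagonal.mem_antidiagonal] at hp
    rw [if_neg]
    rintro ⟨h1, h2, _⟩
    apply hd
    rw [← hp, deg_add, h1, h2]

lemma altsum (m i : ℕ) :
    ∑ k ∈ Finset.range (i+1), (-1:ℚ)^k * ((m+1).choose k) = (-1)^i * (m.choose i) := by
  induction i with
  | zero => simp
  | succ i ih =>
    rw [Finset.sum_range_succ, ih, Nat.choose_succ_succ m i]
    push_cast
    ring

lemma schurHook_zero (a : ℕ) : schurHook a 0 = hsym a := by
  unfold schurHook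
  erw [Matrix.det_fin_one]
  norm_num
  exact hsymZ_coe a


lemma subE (a b : ℕ) :
    Matrix.submatrix (fun i j : Fin (b+2) => hsymZ ((if (i:ℕ) = 0 then (a:ℤ) else 1) - (i:ℕ) + (j:ℕ)))
      (Fin.succAbove 0) Fin.succ
    = fun i j : Fin (b+1) => hsymZ ((if (i:ℕ) = 0 then ((1:ℕ):ℤ) else 1) - (i:ℕ) + (j:ℕ)) := by
  funext i j
  simp only [Matrix.submatrix, Matrix.of_apply, Fin.zero_succAbove, Fin.val_succ]
  have h : ¬ ((i:ℕ) + 1 = 0) := by omega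
  simp only [h, ↓reduceIte]
  have h2 : ((if (i:ℕ) = 0 then ((1:ℕ):ℤ) else 1)) = 1 := by split_ifs <;> norm_num
  rw [h2]
  congr 1
  push_cast
  ring

lemma subF (a b : ℕ) :
    Matrix.submatrix (fun i j : Fin (b+2) => hsymZ ((if (i:ℕ) = 0 then (a:ℤ) else 1) - (i:ℕ) + (j:ℕ)))
      (Fin.succAbove (Fin.succ 0)) Fin.succ
    = fun i j : Fin (b+1) => hsymZ ((if (i:ℕ) = 0 then ((a+1:ℕ):ℤ) else 1) - (i:ℕ) + (j:ℕ)) := by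
  funext i j
  induction i using Fin.cases with
  | zero =>
    simp only [Matrix.submatrix, Matrix.of_apply, Fin.succ_succAbove_zero, Fin.val_succ, Fin.val_zero]
    norm_num
    congr 1
    push_cast
    ring
  | succ i =>
    simp only [Matrix.submatrix, Matrix.of_apply, Fin.succ_succAbove_succ, Fin.zero_succAbove, Fin.val_succ]
    have h : ¬ ((i:ℕ) + 1 + 1 = 0) := by omega
    rw [if_neg h]
    have h' : ¬ ((i:ℕ) + 1 = 0) := by omega
    rw [if_neg h']
    congr 1
    push_cast
    ring

lemma hsymZ_zero : hsymZ 0 = 1 := by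
  have h := hsymZ_coe 0
  norm_num at h
  rw [h, hsym_zero]

lemma schurHook_rec (a b : ℕ) :
    schurHook a (b+1) = hsym a * schurHook 1 b - schurHook (a+1) b := by
  unfold schurHook
  erw [Matrix.det_succ_column_zero, Fin.sum_univ_succ, Fin.sum_univ_succ]
  rw [subE a b, subF a b]
  have hS : (∑ i : Fin b,
      (-1:MvPowerSeries ℕ ℚ) ^ ((i.succ.succ : Fin (b+2)) : ℕ) *
        hsymZ ((if (((i.succ.succ : Fin (b+2)) : ℕ)) = 0 then (a:ℤ) else 1) - (((i.succ.succ : Fin (b+2)) : ℕ)) + (((0 : Fin (b+2)) : ℕ))) *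
        (Matrix.submatrix (fun i j : Fin (b+2) => hsymZ ((if (i:ℕ) = 0 then (a:ℤ) else 1) - (i:ℕ) + (j:ℕ)))
          (i.succ.succ).succAbove Fin.succ).det) = 0 := by
    apply Finset.sum_eq_zero
    intro i _
    have hz : hsymZ ((if (((i.succ.succ : Fin (b+2)) : ℕ)) = 0 then (a:ℤ) else 1) - (((i.succ.succ : Fin (b+2)) : ℕ)) + (((0 : Fin (b+2)) : ℕ))) = 0 := by
      apply hsymZ_neg
      have hv : ((i.succ.succ : Fin (b+2)) : ℕ) = (i : ℕ) + 2 := rfl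
      rw [hv, if_neg (by omega)]
      have hv0 : ((0 : Fin (b+2)) : ℕ) = 0 := rfl
      rw [hv0]
      push_cast
      omega
    rw [hz, mul_zero, zero_mul]
  rw [hS, add_zero]
  have hv0 : ((0 : Fin (b+2)) : ℕ) = 0 := rfl
  have hv1 : ((Fin.succ 0 : Fin (b+2)) : ℕ) = 1 := rfl
  rw [hv0, hv1]
  norm_num [hsymZ_coe, hsymZ_zero]
  ring
lemma coeff_neg_pow_mul (d : ℕ →₀ ℕ) (j : ℕ) (f : MvPowerSeries ℕ ℚ) :
    MvPowerSeries.coeff d ((-1 : MvPowerSeries ℕ ℚ)^j * f) = (-1:ℚ)^j * MvPowerSeries.coeff d f := by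
  have h : (-1 : MvPowerSeries ℕ ℚ)^j = (MvPowerSeries.C : ℚ →+* MvPowerSeries ℕ ℚ) ((-1:ℚ)^j) := by
    rw [map_pow, map_neg, map_one]
  rw [h, MvPowerSeries.coeff_C_mul]

lemma neg_one_pow_sub (i k : ℕ) (hk : k ≤ i) : (-1:ℚ)^(i-k) = (-1)^i * (-1)^k := by
  have h : i + k = (i - k) + 2*k := by omega
  calc (-1:ℚ)^(i-k) = (-1)^(i-k) * ((-1)^2)^k := by norm_num
  _ = (-1)^((i-k) + 2*k) := by rw [← pow_mul, ← pow_add]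
  _ = (-1)^(i+k) := by rw [← h]
  _ = (-1)^i * (-1)^k := by rw [pow_add]

lemma deg_single (j c : ℕ) : deg (Finsupp.single j c) = c := by
  unfold deg
  rw [Finsupp.sum_single_index rfl]

lemma esymA (b : ℕ) :
    esym (b+1) = ∑ j ∈ Finset.range (b+1), (-1 : MvPowerSeries ℕ ℚ)^j * (hsym (1+j) * esym (b-j)) := by
  apply MvPowerSeries.ext; intro d
  rw [map_sum]
  simp only [coeff_neg_pow_mul, coeff_he, coeff_esym]
  by_cases hd : deg d = b + 1
  · have hstep : ∀ j ∈ Finset.range (b+1),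
        (-1:ℚ)^j * (if deg d = (1+j) + (b-j) then ((d.support.card.choose (b-j) : ℕ):ℚ) else 0)
        = (-1:ℚ)^j * (d.support.card.choose (b-j)) := by
      intro j hj
      rw [Finset.mem_range] at hj
      rw [if_pos (by omega)]
    rw [Finset.sum_congr rfl hstep]
    have hne : d ≠ 0 := by
      intro h0; rw [← deg_eq_zero] at h0; omega
    have hm1 : 1 ≤ d.support.card := by
      rcases Finset.eq_empty_or_nonempty d.support with h | h
      · exact absurd (Finsupp.support_eq_empty.mp h) hne
      · exact Finset.Nonempty.card_pos h
    obtain ⟨m', hm'⟩ : ∃ m', d.support.card = m' + 1 := ⟨d.support.card - 1, by omega⟩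
    have hrefl : ∑ j ∈ Finset.range (b+1), (-1:ℚ)^j * (d.support.card.choose (b-j))
        = ∑ k ∈ Finset.range (b+1), (-1:ℚ)^(b-k) * (d.support.card.choose k) := by
      rw [← Finset.sum_range_reflect (fun k => (-1:ℚ)^(b-k) * (d.support.card.choose k)) (b+1)]
      apply Finset.sum_congr rfl
      intro j hj
      rw [Finset.mem_range] at hj
      have h1 : b + 1 - 1 - j = b - j := by omega
      have h2 : b - (b - j) = j := by omega
      rw [h1, h2]
    rw [hrefl]
    have hsplit : ∀ k ∈ Finset.range (b+1), (-1:ℚ)^(b-k) * (d.support.card.choose k)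
        = (-1:ℚ)^b * ((-1:ℚ)^k * ((m'+1).choose k)) := by
      intro k hk
      rw [Finset.mem_range] at hk
      rw [neg_one_pow_sub b k (by omega), hm', mul_assoc]
    rw [Finset.sum_congr rfl hsplit, ← Finset.mul_sum, altsum m' b, ← mul_assoc]
    have hb2 : (-1:ℚ)^b * (-1:ℚ)^b = 1 := by
      rw [← pow_add]; simp [pow_mul, show b + b = 2*b by ring]
    rw [hb2, one_mul]
    by_cases hsf : ∀ i, d i ≤ 1
    · rw [if_pos ⟨hd, hsf⟩]
      have : d.support.card = b + 1 := by rw [← sf_deg hsf, hd]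
      have : m' = b := by omega
      rw [this, Nat.choose_self]
      norm_num
    · rw [if_neg (by tauto)]
      have hlt : d.support.card < deg d := by
        rcases lt_or_eq_of_le (card_le_deg d) with h | h
        · exact h
        · exact absurd (deg_eq_card_iff.mp h.symm) hsf
      have : m' < b := by omega
      rw [Nat.choose_eq_zero_of_lt this]
      norm_num
  · rw [if_neg (by tauto)]
    symm
    apply Finset.sum_eq_zero
    intro j hj
    rw [Finset.mem_range] at hj
    rw [if_neg (by omega), mul_zero]

lemma JT : ∀ b a : ℕ, schurHook a b
    = ∑ j ∈ Finset.range (b+1), (-1 : MvPowerSeries ℕ ℚ)^j * (hsym (a+j) * esym (b-j)) := by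
  intro b
  induction b with
  | zero =>
    intro a
    simp [schurHook_zero, esym_zero]
  | succ b ih =>
    intro a
    rw [schurHook_rec, ih 1, ih (a+1), ← esymA b]
    rw [Finset.sum_range_succ' _ (b+1)]
    have hstep : ∀ j ∈ Finset.range (b+1),
        (-1 : MvPowerSeries ℕ ℚ)^(j+1) * (hsym (a+(j+1)) * esym (b+1-(j+1)))
        = -((-1 : MvPowerSeries ℕ ℚ)^j * (hsym (a+1+j) * esym (b-j))) := by
      intro j hj
      have h1 : a + (j+1) = a + 1 + j := by ring
      have h2 : b + 1 - (j+1) = b - j := by omega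
      rw [h1, h2, pow_succ]
      ring
    rw [Finset.sum_congr rfl hstep, Finset.sum_neg_distrib]
    simp [esym_zero]
    ring

theorem murnaghan_nakayama_cycle (n : ℕ) (hn : 0 < n) :
    psym n = ∑ i ∈ Finset.range n, (-1 : MvPowerSeries ℕ ℚ) ^ i * schurHook (n - i) i := by
  apply MvPowerSeries.ext; intro d
  rw [map_sum, coeff_psym]
  simp only [JT, coeff_neg_pow_mul, map_sum, Finset.mul_sum, coeff_he]
  by_cases hdeg : deg d = n
  · have hne : d ≠ 0 := by
      intro h0; rw [← deg_eq_zero] at h0; omega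
    have hm1 : 1 ≤ d.support.card := by
      rcases Finset.eq_empty_or_nonempty d.support with h | h
      · exact absurd (Finsupp.support_eq_empty.mp h) hne
      · exact Finset.Nonempty.card_pos h
    have hmn : d.support.card ≤ n := by
      have := card_le_deg d; omega
    obtain ⟨m', hm'⟩ : ∃ m', d.support.card = m' + 1 := ⟨d.support.card - 1, by omega⟩
    have hstep : ∀ i ∈ Finset.range n,
        (∑ j ∈ Finset.range (i+1), (-1:ℚ)^i * ((-1:ℚ)^j *
          (if deg d = (n-i+j) + (i-j) then ((d.support.card.choose (i-j) : ℕ):ℚ) else 0)))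
        = (-1:ℚ)^i * (m'.choose i) := by
      intro i hi
      rw [Finset.mem_range] at hi
      have h1 : ∀ j ∈ Finset.range (i+1),
          (-1:ℚ)^i * ((-1:ℚ)^j *
            (if deg d = (n-i+j) + (i-j) then ((d.support.card.choose (i-j) : ℕ):ℚ) else 0))
          = (-1:ℚ)^i * ((-1:ℚ)^j * (d.support.card.choose (i-j))) := by
        intro j hj
        rw [Finset.mem_range] at hj
        rw [if_pos (by omega)]
      rw [Finset.sum_congr rfl h1]
      have hrefl : ∑ j ∈ Finset.range (i+1), (-1:ℚ)^i * ((-1:ℚ)^j * (d.support.card.choose (i-j)))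
          = ∑ k ∈ Finset.range (i+1), (-1:ℚ)^i * ((-1:ℚ)^(i-k) * (d.support.card.choose k)) := by
        rw [← Finset.sum_range_reflect (fun k => (-1:ℚ)^i * ((-1:ℚ)^(i-k) * (d.support.card.choose k))) (i+1)]
        apply Finset.sum_congr rfl
        intro j hj
        rw [Finset.mem_range] at hj
        have e1 : i + 1 - 1 - j = i - j := by omega
        have e2 : i - (i - j) = j := by omega
        rw [e1, e2]
      rw [hrefl]
      have hsplit : ∀ k ∈ Finset.range (i+1),
          (-1:ℚ)^i * ((-1:ℚ)^(i-k) * (d.support.card.choose k))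
          = (-1:ℚ)^k * ((m'+1).choose k) := by
        intro k hk
        rw [Finset.mem_range] at hk
        rw [neg_one_pow_sub i k (by omega), hm']
        have : (-1:ℚ)^i * (-1:ℚ)^i = 1 := by
          rw [← pow_add]
          simp [pow_mul, show i + i = 2*i by ring]
        calc (-1:ℚ)^i * ((-1:ℚ)^i * (-1:ℚ)^k * ((m'+1).choose k))
            = ((-1:ℚ)^i * (-1:ℚ)^i) * ((-1:ℚ)^k * ((m'+1).choose k)) := by ring
        _ = (-1:ℚ)^k * ((m'+1).choose k) := by rw [this, one_mul]
      rw [Finset.sum_congr rfl hsplit, altsum m' i]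
    rw [Finset.sum_congr rfl hstep]
    rcases Nat.eq_zero_or_pos m' with hm0 | hm0
    · subst hm0
      rw [if_pos ?_]
      · rw [Finset.sum_eq_single_of_mem 0 (Finset.mem_range.mpr hn)]
        · norm_num
        · intro i _ hi0
          rw [Nat.choose_eq_zero_of_lt (by omega)]
          norm_num
      · obtain ⟨a, ha, hda⟩ := Finsupp.card_support_eq_one.mp (by omega : d.support.card = 1)
        have hv : d a = n := by rw [hda, deg_single] at hdeg; exact hdeg
        rw [hv] at hda
        exact ⟨a, hda⟩
      
    · rw [if_neg ?_]
      · obtain ⟨n', hn'⟩ : ∃ n', n = n' + 1 := ⟨n - 1, by omega⟩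
        obtain ⟨m'', hm''⟩ : ∃ m'', m' = m'' + 1 := ⟨m' - 1, by omega⟩
        rw [hn', hm'', altsum m'' n', Nat.choose_eq_zero_of_lt (by omega)]
        norm_num
      · rintro ⟨j, rfl⟩
        have : (Finsupp.single j n).support.card = 1 := by
          rw [Finsupp.support_single_ne_zero j (by omega)]
          simp
        omega
  · rw [if_neg ?_]
    · symm
      apply Finset.sum_eq_zero
      intro i hi
      rw [Finset.mem_range] at hi
      apply Finset.sum_eq_zero
      intro j hj
      rw [Finset.mem_range] at hj
      rw [if_neg (by omega), mul_zero, mul_zero]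
    · rintro ⟨j, rfl⟩
      rw [deg_single] at hdeg
      exact hdeg rfl
end

section
/- For every positive integer n, pₙ = ∑_{0 ≤ j ≤ i ≤ n-1} (-1)^{i+j} · h_{n-i+j} · e_{i-j}, where pₙ, hₖ, eₖ are the power sum, complete homogeneous, and elementary symmetric functions. -/
open scoped Classical

/-! Auxiliary lemmas -/

lemma deg_add_s10 (a b : ℕ →₀ ℕ) :
    ((a + b).sum fun _ k => k) = (a.sum fun _ k => k) + (b.sum fun _ k => k) :=
  Finsupp.sum_add_index' (fun _ => rfl) (fun _ _ _ => rfl)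

/-- indicator finsupp of a finset, with value 1. -/
noncomputable def indic (S : Finset ℕ) : ℕ →₀ ℕ :=
  Finsupp.indicator S (fun _ _ => 1)

lemma indic_apply (S : Finset ℕ) (i : ℕ) : indic S i = if i ∈ S then 1 else 0 := by
  classical
  rw [indic, Finsupp.indicator_apply]
  split_ifs <;> rfl

lemma support_indic (S : Finset ℕ) : (indic S).support = S := by
  ext i
  rw [Finsupp.mem_support_iff, indic_apply]
  split_ifs with h <;> simp [h]

lemma deg_indic (S : Finset ℕ) : ((indic S).sum fun _ k => k) = S.card := by
  rw [Finsupp.sum, support_indic]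
  rw [Finset.card_eq_sum_ones]
  refine Finset.sum_congr rfl fun i hi => ?_
  rw [indic_apply, if_pos hi]

lemma coeff_hsym_mul_esym (d : ℕ →₀ ℕ) (a b : ℕ) :
    MvPowerSeries.coeff d (hsym a * esym b) =
      if (d.sum fun _ k => k) = a + b then (d.support.card.choose b : ℚ) else 0 := by
  classical
  rw [MvPowerSeries.coeff_mul]
  have hco : ∀ p : (ℕ →₀ ℕ) × (ℕ →₀ ℕ),
      MvPowerSeries.coeff p.1 (hsym a) * MvPowerSeries.coeff p.2 (esym b)
        = if ((p.1.sum fun _ k => k) = a ∧ (p.2.sum fun _ k => k) = b ∧ ∀ i, p.2 i ≤ 1)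
            then 1 else 0 := by
    intro p
    rw [MvPowerSeries.coeff_apply, MvPowerSeries.coeff_apply, hsym, esym]
    by_cases h1 : (p.1.sum fun _ k => k) = a <;>
      by_cases h2 : (p.2.sum fun _ k => k) = b ∧ ∀ i, p.2 i ≤ 1 <;>
      simp [h1, h2]
  rw [Finset.sum_congr rfl fun p _ => hco p, Finset.sum_boole]
  by_cases hd : (d.sum fun _ k => k) = a + b
  · rw [if_pos hd]
    norm_cast
    rw [← Finset.card_powersetCard b d.support]
    refine Finset.card_bij' (fun p _ => p.2.support)
      (fun S _ => (d - indic S, indic S)) ?_ ?_ ?_ ?_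
    · -- forward membership
      rintro p hp
      rw [Finset.mem_filter, Finset.HasAntidiagonal.mem_antidiagonal] at hp
      obtain ⟨hpd, _, hb2, hle⟩ := hp
      rw [Finset.mem_powersetCard]
      constructor
      · intro i hi
        rw [Finsupp.mem_support_iff] at hi ⊢
        have : d i = p.1 i + p.2 i := by rw [← hpd]; rfl
        omega
      · have : p.2.support.card = (p.2.sum fun _ k => k) := by
          rw [Finsupp.sum, Finset.card_eq_sum_ones]
          refine Finset.sum_congr rfl fun i hi => ?_
          rw [Finsupp.mem_support_iff] at hi
          have := hle i
          omega
        rw [this, hb2]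
    · -- backward membership
      rintro S hS
      rw [Finset.mem_powersetCard] at hS
      obtain ⟨hsub, hcard⟩ := hS
      have hle : ∀ i, indic S i ≤ d i := by
        intro i
        rw [indic_apply]
        split_ifs with h
        · have := hsub h
          rw [Finsupp.mem_support_iff] at this
          omega
        · exact Nat.zero_le _
      have hadd : d - indic S + indic S = d := by
        ext i
        rw [Finsupp.add_apply, Finsupp.tsub_apply]
        have := hle i
        omega
      rw [Finset.mem_filter, Finset.HasAntidiagonal.mem_antidiagonal]
      dsimp only
      refine ⟨hadd, ?_, ?_, ?_⟩
      · have := deg_add_s10 (d - indic S) (indic S)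
        rw [hadd, deg_indic, hcard] at this
        omega
      · rw [deg_indic, hcard]
      · intro i
        rw [indic_apply]
        split_ifs <;> omega
    · -- left inverse
      rintro p hp
      rw [Finset.mem_filter, Finset.HasAntidiagonal.mem_antidiagonal] at hp
      obtain ⟨hpd, _, _, hle⟩ := hp
      have h2 : indic p.2.support = p.2 := by
        ext i
        rw [indic_apply]
        have := hle i
        by_cases h : p.2 i = 0
        · simp [Finsupp.mem_support_iff, h]
        · rw [if_pos (Finsupp.mem_support_iff.2 h)]; omega
      have h1 : d - indic p.2.support = p.1 := by
        rw [h2]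
        ext i
        rw [Finsupp.tsub_apply]
        have : d i = p.1 i + p.2 i := by rw [← hpd]; rfl
        omega
      rw [Prod.ext_iff]
      exact ⟨h1, h2⟩
    · -- right inverse
      rintro S _
      exact support_indic S
  · rw [if_neg hd]
    have : Finset.filter (fun p : (ℕ →₀ ℕ) × (ℕ →₀ ℕ) =>
        (p.1.sum fun _ k => k) = a ∧ (p.2.sum fun _ k => k) = b ∧ ∀ i, p.2 i ≤ 1)
        (Finset.HasAntidiagonal.antidiagonal d) = ∅ := by
      refine Finset.filter_eq_empty_iff.2 ?_
      rintro p hp ⟨h1, h2, _⟩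
      rw [Finset.HasAntidiagonal.mem_antidiagonal] at hp
      exact hd (by rw [← hp, deg_add_s10, h1, h2])
    rw [this]
    simp
  
lemma coeff_neg_one_pow_mul (d : ℕ →₀ ℕ) (k : ℕ) (φ : MvPowerSeries ℕ ℚ) :
    MvPowerSeries.coeff d ((-1 : MvPowerSeries ℕ ℚ) ^ k * φ)
      = (-1 : ℚ) ^ k * MvPowerSeries.coeff d φ := by
  have h : ((-1 : MvPowerSeries ℕ ℚ)) ^ k = MvPowerSeries.C ((-1 : ℚ) ^ k) := by
    rw [map_pow, map_neg, map_one]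
  rw [h, MvPowerSeries.coeff_C_mul]

lemma alt_sum (M : ℕ) : ∀ N, ∑ i ∈ Finset.range (N + 1),
    (-1 : ℚ) ^ i * ((M + 1).choose i) = (-1) ^ N * (M.choose N) := by
  intro N
  induction N with
  | zero => simp
  | succ N ih =>
    rw [Finset.sum_range_succ, ih, Nat.choose_succ_succ M N]
    push_cast
    ring

lemma innerAltSum (M : ℕ) : ∀ i, ∑ j ∈ Finset.range (i + 1),
    (-1 : ℚ) ^ (i + j) * ((M + 1).choose (i - j)) = (-1) ^ i * (M.choose i) := by
  intro i
  induction i with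
  | zero => simp
  | succ i ih =>
    rw [Finset.sum_range_succ']
    have hcongr : ∀ j ∈ Finset.range (i + 1),
        (-1 : ℚ) ^ (i + 1 + (j + 1)) * ((M + 1).choose (i + 1 - (j + 1)))
          = (-1 : ℚ) ^ (i + j) * ((M + 1).choose (i - j)) := by
      intro j _
      have h1 : i + 1 - (j + 1) = i - j := by omega
      have h2 : (-1 : ℚ) ^ (i + 1 + (j + 1)) = (-1 : ℚ) ^ (i + j) := by
        have he : i + 1 + (j + 1) = (i + j) + 2 := by omega
        rw [he, pow_add]; norm_num
      rw [h1, h2]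
    rw [Finset.sum_congr rfl hcongr, ih]
    simp only [add_zero, Nat.sub_zero]
    rw [Nat.choose_succ_succ M i]
    push_cast
    ring

lemma total_sum (n m : ℕ) (hn : 0 < n) (hm1 : 1 ≤ m) (hmn : m ≤ n) :
    ∑ i ∈ Finset.range n, ∑ j ∈ Finset.range (i + 1),
      (-1 : ℚ) ^ (i + j) * (m.choose (i - j)) = if m = 1 then 1 else 0 := by
  obtain ⟨M, rfl⟩ : ∃ M, m = M + 1 := ⟨m - 1, by omega⟩
  rw [Finset.sum_congr rfl fun i _ => innerAltSum M i]
  rcases Nat.eq_zero_or_pos M with hM | hM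
  · subst hM
    rw [if_pos rfl, Finset.sum_eq_single 0]
    · simp
    · intro i _ hne
      have : (0 : ℕ).choose i = 0 := Nat.choose_eq_zero_of_lt (by omega)
      simp [this]
    · intro h
      exact absurd (Finset.mem_range.2 hn) h
  · rw [if_neg (by omega)]
    obtain ⟨N, rfl⟩ : ∃ N, n = N + 1 := ⟨n - 1, by omega⟩
    obtain ⟨M', rfl⟩ : ∃ M', M = M' + 1 := ⟨M - 1, by omega⟩
    rw [alt_sum M' N]
    have : M'.choose N = 0 := Nat.choose_eq_zero_of_lt (by omega)
    simp [this]

theorem psym_eq_double_sum_h_mul_e (n : ℕ) (hn : 0 < n) :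
    psym n
      = ∑ i ∈ Finset.range n, ∑ j ∈ Finset.range (i + 1),
          (-1 : MvPowerSeries ℕ ℚ) ^ (i + j) * hsym (n - i + j) * esym (i - j) := by
  apply MvPowerSeries.ext
  intro d
  rw [map_sum]
  simp only [map_sum]
  have hterm : ∀ i ∈ Finset.range n, ∀ j ∈ Finset.range (i + 1),
      MvPowerSeries.coeff d
          ((-1 : MvPowerSeries ℕ ℚ) ^ (i + j) * hsym (n - i + j) * esym (i - j))
        = (-1 : ℚ) ^ (i + j) *
            (if (d.sum fun _ k => k) = n then (d.support.card.choose (i - j) : ℚ) else 0) := by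
    intro i hi j hj
    rw [Finset.mem_range] at hi hj
    rw [mul_assoc, coeff_neg_one_pow_mul, coeff_hsym_mul_esym]
    have : n - i + j + (i - j) = n := by omega
    rw [this]
  rw [Finset.sum_congr rfl fun i hi => Finset.sum_congr rfl fun j hj => hterm i hi j hj]
  by_cases hd : (d.sum fun _ k => k) = n
  · simp only [if_pos hd]
    have hm1 : 1 ≤ d.support.card := by
      rcases Finset.eq_empty_or_nonempty d.support with h | h
      · exfalso
        rw [Finsupp.support_eq_empty] at h
        subst h
        simp at hd
        omega
      · exact Finset.card_pos.2 h
    have hmn : d.support.card ≤ n := by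
      have h1 : d.support.card ≤ ∑ i ∈ d.support, d i := by
        simpa using Finset.card_nsmul_le_sum d.support d 1
          (fun i hi => Nat.one_le_iff_ne_zero.2 (Finsupp.mem_support_iff.1 hi))
      have h2 : (d.sum fun _ k => k) = ∑ i ∈ d.support, d i := rfl
      omega
    rw [total_sum n d.support.card hn hm1 hmn]
    have hiff : (∃ j, d = Finsupp.single j n) ↔ d.support.card = 1 := by
      constructor
      · rintro ⟨j, rfl⟩
        rw [Finsupp.support_single_ne_zero j hn.ne']
        simp
      · intro h
        obtain ⟨a, b, hb, rfl⟩ := Finsupp.card_support_eq_one'.1 h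
        refine ⟨a, ?_⟩
        have hbn : b = n := by
          rw [Finsupp.sum_single_index] at hd
          · exact hd
          · rfl
        rw [hbn]
    rw [MvPowerSeries.coeff_apply, psym]
    exact if_congr hiff rfl rfl
  · simp only [if_neg hd, mul_zero, Finset.sum_const_zero]
    rw [MvPowerSeries.coeff_apply, psym, if_neg]
    rintro ⟨j, rfl⟩
    apply hd
    rw [Finsupp.sum_single_index]
    rfl
end

section
/- For every positive integer n and real numbers with x_j = 1/j², the power sum evaluation ∑_{j≥1} 1/j^{2n} equals (-1)^{n+1} · (2π)^{2n} · B_{2n} / (2 · (2n)!), and combining with the Hoffman evaluations of e and h, the identity ∑_{0 ≤ j ≤ i ≤ n-1} (-1)^{i+j} · [(-1)^{n-i+j} π^{2(n-i+j)} (2 - 2^{2(n-i+j)}) B_{2(n-i+j)}/(2(n-i+j))!] · [π^{2(i-j)}/(2(i-j)+1)!] = (-1)^{n+1}(2π)^{2n} B_{2n}/(2(2n)!) holds. -/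
open Real Finset PowerSeries

-- series identity: (exp + 1) * rescale 2 B = 2 * B
lemma psdsb_series : (PowerSeries.exp ℚ + 1) * PowerSeries.rescale (2:ℚ) (bernoulliPowerSeries ℚ)
    = 2 * bernoulliPowerSeries ℚ := by
  have hB : bernoulliPowerSeries ℚ * (PowerSeries.exp ℚ - 1) = PowerSeries.X :=
    bernoulliPowerSeries_mul_exp_sub_one ℚ
  have hE2 : PowerSeries.exp ℚ * PowerSeries.exp ℚ = PowerSeries.rescale (2:ℚ) (PowerSeries.exp ℚ) := by
    have := PowerSeries.exp_pow_eq_rescale_exp (A := ℚ) 2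
    simpa [pow_two] using this
  have hX : PowerSeries.rescale (2:ℚ) (PowerSeries.X : PowerSeries ℚ) = 2 * PowerSeries.X := by
    ext n
    rw [show (2 : PowerSeries ℚ) * PowerSeries.X = PowerSeries.C (2:ℚ) * PowerSeries.X by
      rw [map_ofNat]]
    simp only [PowerSeries.coeff_rescale, PowerSeries.coeff_X, PowerSeries.coeff_C_mul]
    split <;> simp_all
  have h2 : PowerSeries.rescale (2:ℚ) (bernoulliPowerSeries ℚ)
      * (PowerSeries.rescale (2:ℚ) (PowerSeries.exp ℚ) - 1) = 2 * PowerSeries.X := by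
    rw [← hX, ← map_one (PowerSeries.rescale (2:ℚ)), ← map_sub, ← map_mul, hB]
  have hne : (PowerSeries.exp ℚ - 1) ≠ 0 := by
    intro h
    have := congrArg (PowerSeries.coeff (R := ℚ) 1) h
    simp [PowerSeries.coeff_exp] at this
  apply mul_right_cancel₀ hne
  calc (PowerSeries.exp ℚ + 1) * PowerSeries.rescale (2:ℚ) (bernoulliPowerSeries ℚ)
        * (PowerSeries.exp ℚ - 1)
      = PowerSeries.rescale (2:ℚ) (bernoulliPowerSeries ℚ)
        * (PowerSeries.exp ℚ * PowerSeries.exp ℚ - 1) := by ring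
    _ = 2 * PowerSeries.X := by rw [hE2, h2]
    _ = 2 * bernoulliPowerSeries ℚ * (PowerSeries.exp ℚ - 1) := by rw [mul_assoc, hB]

lemma psdsb_G (N : ℕ) : ∑ k ∈ range (N+1), (N.choose k : ℚ) * ((2:ℚ)^k * bernoulli k)
    = 2 * bernoulli N - 2^N * bernoulli N := by
  have h : PowerSeries.rescale (2:ℚ) (bernoulliPowerSeries ℚ) * PowerSeries.exp ℚ
      = 2 * bernoulliPowerSeries ℚ - PowerSeries.rescale (2:ℚ) (bernoulliPowerSeries ℚ) := by
    linear_combination psdsb_series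
  have hc := congrArg (PowerSeries.coeff (R := ℚ) N) h
  rw [PowerSeries.coeff_mul, Finset.Nat.sum_antidiagonal_eq_sum_range_succ_mk,
    show (2 : PowerSeries ℚ) * bernoulliPowerSeries ℚ
      = PowerSeries.C (2:ℚ) * bernoulliPowerSeries ℚ by rw [map_ofNat]] at hc
  simp only [map_sub, PowerSeries.coeff_rescale, bernoulliPowerSeries, PowerSeries.coeff_mk,
    PowerSeries.coeff_exp, PowerSeries.coeff_C_mul, Algebra.algebraMap_self, RingHom.id_apply] at hc
  have hfact : ∀ m : ℕ, (m.factorial : ℚ) ≠ 0 := fun m => by exact_mod_cast m.factorial_ne_zero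
  calc ∑ k ∈ range (N+1), (N.choose k:ℚ) * ((2:ℚ)^k * bernoulli k)
      = ∑ k ∈ range (N+1), (N.factorial:ℚ) * (2^k * (bernoulli k / k.factorial) * (1/(N-k).factorial)) := by
        refine sum_congr rfl fun k hk => ?_
        have hk' : k ≤ N := by have := mem_range.mp hk; omega
        rw [Nat.cast_choose ℚ hk']
        field_simp
    _ = (N.factorial:ℚ) * ∑ k ∈ range (N+1), (2^k * (bernoulli k / k.factorial) * (1/(N-k).factorial)) := by rw [mul_sum]
    _ = 2 * bernoulli N - 2^N * bernoulli N := by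
        rw [Nat.succ_eq_add_one] at hc
        rw [hc]
        field_simp

lemma psdsb_shift (f : ℕ → ℚ) (M : ℕ) :
    ∑ j ∈ range (M+1), (M.choose j : ℚ) * f (j+1)
      = (∑ k ∈ range (M+2), ((M+1).choose k : ℚ) * f k)
        - ∑ k ∈ range (M+1), (M.choose k : ℚ) * f k := by
  have h1 : ∑ k ∈ range (M+2), ((M+1).choose k : ℚ) * f k
      = (∑ j ∈ range (M+1), ((M+1).choose (j+1) : ℚ) * f (j+1)) + f 0 := by
    rw [Finset.sum_range_succ']
    simp
  have h2 : ∑ k ∈ range (M+1), (M.choose k : ℚ) * f k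
      = (∑ j ∈ range M, (M.choose (j+1) : ℚ) * f (j+1)) + f 0 := by
    rw [Finset.sum_range_succ']
    simp
  have h3 : ∑ j ∈ range (M+1), (M.choose (j+1) : ℚ) * f (j+1)
      = ∑ j ∈ range M, (M.choose (j+1) : ℚ) * f (j+1) := by
    rw [Finset.sum_range_succ, Nat.choose_succ_self]
    simp
  have h4 : ∀ j ∈ range (M+1), (M.choose j : ℚ) * f (j+1)
      = ((M+1).choose (j+1) : ℚ) * f (j+1) - (M.choose (j+1) : ℚ) * f (j+1) := by
    intro j _
    rw [Nat.choose_succ_succ]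
    push_cast
    ring
  rw [Finset.sum_congr rfl h4, Finset.sum_sub_distrib, h1, h2, ← h3]
  ring

lemma psdsb_parity (f : ℕ → ℚ) (n : ℕ) :
    ∑ k ∈ range (2*n), f k = (∑ i ∈ range n, f (2*i)) + ∑ i ∈ range n, f (2*i+1) := by
  induction n with
  | zero => simp
  | succ n ih =>
    rw [show 2*(n+1) = (2*n+1)+1 by ring, Finset.sum_range_succ, Finset.sum_range_succ, ih,
      Finset.sum_range_succ, Finset.sum_range_succ]
    ring

lemma psdsb_bodd (i : ℕ) (h : 0 < i) : bernoulli (2*i+1) = 0 := by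
  rw [bernoulli_eq_bernoulli'_of_ne_one (by omega)]
  exact bernoulli'_eq_zero_of_odd ⟨i, by ring⟩ (by omega)

lemma psdsb_key (n : ℕ) (hn : 0 < n) :
    ∑ d ∈ range n, ((n - d : ℕ) : ℚ) * (2 - 2^(2*(n-d))) * bernoulli (2*(n-d))
        / (((2*(n-d)).factorial : ℚ) * ((2*d+1).factorial : ℚ))
      = -(2^(2*n)) * bernoulli (2*n) / (2 * ((2*n).factorial : ℚ)) := by
  set g : ℕ → ℚ := fun j => ((2*n).choose j : ℚ) * ((2 - 2^(j+1)) * bernoulli (j+1)) with hg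
  have hb : bernoulli (2*n+1) = 0 := psdsb_bodd n hn
  have hsum : ∑ j ∈ range (2*n+1), g j = -(2^(2*n)) * bernoulli (2*n) := by
    have e1 := psdsb_shift (fun k => bernoulli k) (2*n)
    have e2 := psdsb_shift (fun k => (2:ℚ)^k * bernoulli k) (2*n)
    have F1 : ∑ k ∈ range (2*n+1), ((2*n).choose k : ℚ) * bernoulli k = bernoulli (2*n) := by
      rw [Finset.sum_range_succ, sum_bernoulli, Nat.choose_self]
      have : ¬ (2*n = 1) := by omega
      simp [this]
    have F2 : ∑ k ∈ range (2*n+2), ((2*n+1).choose k : ℚ) * bernoulli k = bernoulli (2*n+1) := by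
      rw [Finset.sum_range_succ, sum_bernoulli, Nat.choose_self]
      have : ¬ (2*n+1 = 1) := by omega
      simp [this, hn.ne']
    have G1 := psdsb_G (2*n)
    have G2 := psdsb_G (2*n+1)
    have hsplit : ∀ j ∈ range (2*n+1), g j
        = 2 * (((2*n).choose j : ℚ) * bernoulli (j+1))
          - ((2*n).choose j : ℚ) * ((2:ℚ)^(j+1) * bernoulli (j+1)) := by
      intro j _
      rw [hg]
      ring
    rw [Finset.sum_congr rfl hsplit, Finset.sum_sub_distrib, ← Finset.mul_sum, e1, e2, F1, F2,
      G1, show 2*n+1+1 = 2*n+2 by ring, G2, hb]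
    ring
  have hgeven : ∀ i ∈ range n, g (2*i) = 0 := by
    intro i _
    rcases Nat.eq_zero_or_pos i with h | h
    · subst h
      simp [hg]
    · rw [hg]
      simp only []
      rw [show 2*i+1 = 2*i+1 from rfl, psdsb_bodd i h]
      ring
  have hglast : g (2*n) = 0 := by
    rw [hg]
    simp only []
    rw [psdsb_bodd n hn]
    ring
  have hodd : ∑ i ∈ range n, g (2*i+1) = -(2^(2*n)) * bernoulli (2*n) := by
    rw [← hsum, Finset.sum_range_succ, hglast, add_zero, psdsb_parity,
      Finset.sum_eq_zero hgeven, zero_add]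
  rw [← Finset.sum_range_reflect]
  have hterm : ∀ i ∈ range n,
      ((n - (n-1-i) : ℕ) : ℚ) * (2 - 2^(2*(n-(n-1-i)))) * bernoulli (2*(n-(n-1-i)))
        / (((2*(n-(n-1-i))).factorial : ℚ) * ((2*(n-1-i)+1).factorial : ℚ))
      = g (2*i+1) / (2 * ((2*n).factorial : ℚ)) := by
    intro i hi
    have hi' : i < n := mem_range.mp hi
    have h1 : n - (n-1-i) = i+1 := by omega
    rw [h1, hg]
    simp only []
    have h2 : 2*(i+1) = 2*i+1+1 := by ring
    rw [h2]
    have hch : ((2*n).choose (2*i+1)) * ((2*i+1).factorial * (2*n - (2*i+1)).factorial)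
        = (2*n).factorial := by
      rw [← mul_assoc]
      exact Nat.choose_mul_factorial_mul_factorial (by omega)
    have h3 : 2*n - (2*i+1) = 2*(n-1-i)+1 := by omega
    rw [h3] at hch
    have h4 : ((2*i+1+1).factorial : ℚ) = (2*i+2) * ((2*i+1).factorial : ℚ) := by
      rw [show (2*i+1+1) = (2*i+1)+1 from rfl, Nat.factorial_succ]
      push_cast
      ring
    have hch' : (((2*n).choose (2*i+1)) : ℚ) * (((2*i+1).factorial : ℚ) * ((2*(n-1-i)+1).factorial : ℚ))
        = ((2*n).factorial : ℚ) := by exact_mod_cast congrArg (Nat.cast : ℕ → ℚ) hch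
    have hf1 : ((2*i+1).factorial : ℚ) ≠ 0 := by exact_mod_cast (2*i+1).factorial_ne_zero
    have hf2 : ((2*(n-1-i)+1).factorial : ℚ) ≠ 0 := by exact_mod_cast (2*(n-1-i)+1).factorial_ne_zero
    have hf3 : ((2*n).factorial : ℚ) ≠ 0 := by exact_mod_cast (2*n).factorial_ne_zero
    rw [h4]
    rw [div_eq_div_iff (by positivity) (by positivity)]
    push_cast
    push_cast at hch'
    linear_combination (((2:ℚ)^(2*i+1+1) - 2) * bernoulli (2*i+1+1) * (2*(i:ℚ)+2)) * hch'
  rw [Finset.sum_congr rfl hterm, ← Finset.sum_div, hodd]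

lemma psdsb_collapse (c : ℕ → ℝ) (n : ℕ) :
    ∑ i ∈ range n, ∑ j ∈ range (i+1), c (i - j) = ∑ d ∈ range n, ((n - d : ℕ) : ℝ) * c d := by
  induction n with
  | zero => simp
  | succ n ih =>
    rw [Finset.sum_range_succ, ih]
    have h1 : ∑ j ∈ range (n+1), c (n - j) = ∑ d ∈ range (n+1), c d := by
      have := Finset.sum_range_reflect c (n+1)
      simpa using this
    have h2 : ∑ d ∈ range (n+1), ((n+1-d : ℕ) : ℝ) * c d
        = ∑ d ∈ range (n+1), (((n-d : ℕ) : ℝ) * c d + c d) := by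
      refine Finset.sum_congr rfl fun d hd => ?_
      have hd' : d ≤ n := by have := mem_range.mp hd; omega
      have : n+1-d = (n-d)+1 := by omega
      rw [this]
      push_cast
      ring
    rw [h1, h2, Finset.sum_add_distrib, Finset.sum_range_succ (fun d => ((n-d : ℕ) : ℝ) * c d) n]
    simp

theorem power_sum_and_double_sum_bernoulli (n : ℕ) (hn : 0 < n) :
    (∑' j : ℕ, (1 : ℝ) / ((j : ℝ) + 1) ^ (2 * n))
        = (-1 : ℝ) ^ (n + 1) * (2 * π) ^ (2 * n) * ((bernoulli (2 * n) : ℚ) : ℝ) /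
            (2 * (Nat.factorial (2 * n) : ℝ))
      ∧ ∑ i ∈ Finset.range n, ∑ j ∈ Finset.range (i + 1),
            (-1 : ℝ) ^ (i + j) *
              ((-1 : ℝ) ^ (n - i + j) * π ^ (2 * (n - i + j)) * (2 - 2 ^ (2 * (n - i + j))) *
                  ((bernoulli (2 * (n - i + j)) : ℚ) : ℝ) /
                (Nat.factorial (2 * (n - i + j)) : ℝ)) *
              (π ^ (2 * (i - j)) / (Nat.factorial (2 * (i - j) + 1) : ℝ))
        = (-1 : ℝ) ^ (n + 1) * (2 * π) ^ (2 * n) * ((bernoulli (2 * n) : ℚ) : ℝ) /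
            (2 * (Nat.factorial (2 * n) : ℝ)) := by
  constructor
  · -- part 1
    have hz := hasSum_zeta_nat (k := n) hn.ne'
    have hshift : HasSum (fun j : ℕ => (1:ℝ) / ((j : ℝ) + 1) ^ (2 * n))
        ((-1 : ℝ) ^ (n + 1) * (2 : ℝ) ^ (2 * n - 1) * π ^ (2 * n) *
          ((bernoulli (2 * n) : ℚ) : ℝ) / ((2 * n).factorial : ℝ)) := by
      have h0 : (1:ℝ) / ((0:ℕ) : ℝ) ^ (2 * n) = 0 := by
        rw [Nat.cast_zero, zero_pow (by omega), div_zero]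
      have hz' := (hasSum_nat_add_iff' (f := fun j : ℕ => (1:ℝ) / ((j : ℝ)) ^ (2 * n)) 1).mpr hz
      rw [Finset.sum_range_one, h0, sub_zero] at hz'
      convert hz' using 2 with j
      · rfl
      push_cast
      ring
    rw [hshift.tsum_eq]
    have h2 : (2 : ℝ) ^ (2 * n) = 2 ^ (2 * n - 1) * 2 := by
      rw [← pow_succ]
      congr 1
      omega
    rw [mul_pow, h2]
    ring
  · -- part 2
    set c : ℕ → ℝ := fun d => (2 - 2 ^ (2 * (n - d))) * ((bernoulli (2 * (n - d)) : ℚ) : ℝ) /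
      (((2 * (n - d)).factorial : ℝ) * ((2 * d + 1).factorial : ℝ)) with hc
    have hterm : ∀ i ∈ range n, ∀ j ∈ range (i+1),
        (-1 : ℝ) ^ (i + j) *
            ((-1 : ℝ) ^ (n - i + j) * π ^ (2 * (n - i + j)) * (2 - 2 ^ (2 * (n - i + j))) *
                ((bernoulli (2 * (n - i + j)) : ℚ) : ℝ) /
              (Nat.factorial (2 * (n - i + j)) : ℝ)) *
            (π ^ (2 * (i - j)) / (Nat.factorial (2 * (i - j) + 1) : ℝ))
          = ((-1 : ℝ) ^ n * π ^ (2 * n)) * c (i - j) := by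
      intro i hi j hj
      have hi' : i < n := mem_range.mp hi
      have hj' : j ≤ i := by have := mem_range.mp hj; omega
      have hd : n - i + j = n - (i - j) := by omega
      rw [hd]
      have hs : (-1 : ℝ) ^ (i + j) * (-1 : ℝ) ^ (n - (i - j)) = (-1 : ℝ) ^ n := by
        rw [← pow_add, show i + j + (n - (i - j)) = n + 2 * j by omega, pow_add, pow_mul,
          neg_one_sq, one_pow, mul_one]
      have hπ : π ^ (2 * (n - (i - j))) * π ^ (2 * (i - j)) = π ^ (2 * n) := by
        rw [← pow_add]
        congr 1
        omega
      rw [hc]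
      simp only []
      rw [← hs, ← hπ]
      ring
    have hkey := psdsb_key n hn
    have hkeyR := congrArg (fun q : ℚ => (q : ℝ)) hkey
    push_cast at hkeyR
    calc ∑ i ∈ Finset.range n, ∑ j ∈ Finset.range (i + 1),
            (-1 : ℝ) ^ (i + j) *
              ((-1 : ℝ) ^ (n - i + j) * π ^ (2 * (n - i + j)) * (2 - 2 ^ (2 * (n - i + j))) *
                  ((bernoulli (2 * (n - i + j)) : ℚ) : ℝ) /
                (Nat.factorial (2 * (n - i + j)) : ℝ)) *
              (π ^ (2 * (i - j)) / (Nat.factorial (2 * (i - j) + 1) : ℝ))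
        = ∑ i ∈ range n, ∑ j ∈ range (i+1), ((-1 : ℝ) ^ n * π ^ (2 * n)) * c (i - j) :=
          Finset.sum_congr rfl fun i hi => Finset.sum_congr rfl (hterm i hi)
      _ = ((-1 : ℝ) ^ n * π ^ (2 * n)) * ∑ i ∈ range n, ∑ j ∈ range (i+1), c (i - j) := by
          rw [Finset.mul_sum]
          exact Finset.sum_congr rfl fun i _ => (Finset.mul_sum _ _ _).symm
      _ = ((-1 : ℝ) ^ n * π ^ (2 * n)) * ∑ d ∈ range n, ((n - d : ℕ) : ℝ) * c d := by
          rw [psdsb_collapse]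
      _ = (-1 : ℝ) ^ (n + 1) * (2 * π) ^ (2 * n) * ((bernoulli (2 * n) : ℚ) : ℝ) /
            (2 * (Nat.factorial (2 * n) : ℝ)) := by
          have hsum : ∑ d ∈ range n, ((n - d : ℕ) : ℝ) * c d
              = -(2^(2*n)) * ((bernoulli (2*n) : ℚ) : ℝ) / (2 * ((2*n).factorial : ℝ)) := by
            rw [← hkeyR]
            refine Finset.sum_congr rfl fun d hd => ?_
            rw [hc]
            simp only []
            ring
          rw [hsum, mul_pow, pow_succ]
          ring
end
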